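/- arXiv:2304.10413 — 8 statements merged into one kernel-verified Lean document; each statement's English description precedes it below -/
import Mathlib

section
/- Let α > 1/2 and let r(h) = |h|^α for h ∈ Z \ {0}. For any prime p and 1/2 ≤ λ < α, the average over z ∈ {0,…,p−1} of (∑_{h ≠ 0, hz ≡ 0 mod p} r(h)^{-2})^{1/(2λ)} is at most (2/p) ∑_{h ≠ 0} |h|^{-α/λ}. -/
open scoped BigOperators

lemma ennreal_sum_rpow_le {ι : Type*} (f : ι → ENNReal) {q : ℝ} (hq0 : 0 < q) (hq1 : q ≤ 1)
    (s : Finset ι) : (∑ i ∈ s, f i) ^ q ≤ ∑ i ∈ s, (f i) ^ q := by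
  classical
  induction s using Finset.induction with
  | empty => simp [ENNReal.zero_rpow_of_pos hq0]
  | insert _ _ hx ih =>
      rw [Finset.sum_insert hx, Finset.sum_insert hx]
      calc (f _ + _) ^ q ≤ (f _) ^ q + (∑ i ∈ _, f i) ^ q :=
            ENNReal.rpow_add_le_add_rpow _ _ hq0.le hq1
        _ ≤ _ := add_le_add_right ih _

lemma ennreal_tsum_rpow_le {ι : Type*} (f : ι → ENNReal) {q : ℝ} (hq0 : 0 < q) (hq1 : q ≤ 1) :
    (∑' i, f i) ^ q ≤ ∑' i, (f i) ^ q := by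
  have key : ∑' i, f i ≤ (∑' i, (f i) ^ q) ^ (1 / q) := by
    rw [ENNReal.tsum_eq_iSup_sum]
    refine iSup_le fun s => ?_
    have h1 : (∑ i ∈ s, f i) ^ q ≤ ∑' i, (f i) ^ q :=
      le_trans (ennreal_sum_rpow_le f hq0 hq1 s) (ENNReal.sum_le_tsum s)
    have := ENNReal.rpow_le_rpow h1 (by positivity : (0:ℝ) ≤ 1 / q)
    rwa [← ENNReal.rpow_mul, mul_one_div, div_self hq0.ne', ENNReal.rpow_one] at this
  have := ENNReal.rpow_le_rpow key hq0.le
  rwa [← ENNReal.rpow_mul, one_div, inv_mul_cancel₀ hq0.ne', ENNReal.rpow_one] at this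

lemma real_tsum_rpow_le {ι : Type*} (f : ι → ℝ) (hf : ∀ i, 0 ≤ f i) {q : ℝ}
    (hq0 : 0 < q) (hq1 : q ≤ 1) (hsum : Summable fun i => (f i) ^ q) :
    (∑' i, f i) ^ q ≤ ∑' i, (f i) ^ q := by
  by_cases hfs : Summable f
  · have h1 : ENNReal.ofReal (∑' i, f i) = ∑' i, ENNReal.ofReal (f i) :=
      ENNReal.ofReal_tsum_of_nonneg hf hfs
    have h2 : ENNReal.ofReal (∑' i, (f i) ^ q) = ∑' i, ENNReal.ofReal ((f i) ^ q) :=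
      ENNReal.ofReal_tsum_of_nonneg (fun i => Real.rpow_nonneg (hf i) q) hsum
    have h3 : (∑' i, ENNReal.ofReal (f i)) ^ q ≤ ∑' i, (ENNReal.ofReal (f i)) ^ q :=
      ennreal_tsum_rpow_le _ hq0 hq1
    have h4 : ENNReal.ofReal ((∑' i, f i) ^ q) ≤ ENNReal.ofReal (∑' i, (f i) ^ q) := by
      rw [← ENNReal.ofReal_rpow_of_nonneg (tsum_nonneg hf) hq0.le, h1, h2]
      refine le_trans h3 (le_of_eq (tsum_congr fun i => ?_))
      rw [ENNReal.ofReal_rpow_of_nonneg (hf i) hq0.le]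
    have h5 := ENNReal.toReal_mono ENNReal.ofReal_ne_top h4
    rwa [ENNReal.toReal_ofReal (Real.rpow_nonneg (tsum_nonneg hf) q),
      ENNReal.toReal_ofReal (tsum_nonneg fun i => Real.rpow_nonneg (hf i) q)] at h5
  · rw [tsum_eq_zero_of_not_summable hfs, Real.zero_rpow hq0.ne']
    exact tsum_nonneg fun i => Real.rpow_nonneg (hf i) q

theorem stmt6 (p : ℕ) (hp : p.Prime) (α lam : ℝ)
    (hα : 1 / 2 < α) (hlam1 : 1 / 2 ≤ lam) (hlam2 : lam < α) :
    (1 / (p : ℝ)) * ∑ z ∈ Finset.range p,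
        (∑' h : {h : ℤ // h ≠ 0 ∧ (p : ℤ) ∣ h * z}, (|(h : ℤ)| : ℝ) ^ (-2 * α)) ^
          (1 / (2 * lam)) ≤
      (2 / (p : ℝ)) * ∑' h : {h : ℤ // h ≠ 0}, (|(h : ℤ)| : ℝ) ^ (-(α / lam)) := by
  have hlam0 : 0 < lam := lt_of_lt_of_le (by norm_num) hlam1
  set β : ℝ := α / lam with hβ
  have hβ1 : 1 < β := (one_lt_div hlam0).2 hlam2
  have hβ0 : 0 < β := lt_trans one_pos hβ1
  set q : ℝ := 1 / (2 * lam) with hq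
  have hq0 : 0 < q := by positivity
  have hq1 : q ≤ 1 := by
    rw [hq, div_le_one (by positivity)]; linarith
  -- summability of the basic series
  have hsum : Summable (fun h : ℤ => |(h : ℝ)| ^ (-β)) := Real.summable_abs_int_rpow hβ1
  have hsum' : ∀ (s : Set ℤ), Summable (fun h : s => |((h : ℤ) : ℝ)| ^ (-β)) :=
    fun s => hsum.subtype s
  set S : ℝ := ∑' h : {h : ℤ // h ≠ 0}, |((h : ℤ) : ℝ)| ^ (-β) with hS
  have hS0 : 0 ≤ S := tsum_nonneg fun h => Real.rpow_nonneg (abs_nonneg _) _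
  -- the key exponent identity
  have hexp : ∀ x : ℝ, 0 ≤ x → (x ^ (-2 * α)) ^ q = x ^ (-β) := by
    intro x hx
    rw [← Real.rpow_mul hx]
    congr 1
    rw [hq, hβ]
    field_simp
  -- Jensen step for each z
  have jensen : ∀ z : ℕ,
      (∑' h : {h : ℤ // h ≠ 0 ∧ (p : ℤ) ∣ h * z}, |((h : ℤ) : ℝ)| ^ (-2 * α)) ^ q ≤
      ∑' h : {h : ℤ // h ≠ 0 ∧ (p : ℤ) ∣ h * z}, |((h : ℤ) : ℝ)| ^ (-β) := by
    intro z
    have hs : Summable (fun h : {h : ℤ // h ≠ 0 ∧ (p : ℤ) ∣ h * z} =>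
        (|((h : ℤ) : ℝ)| ^ (-2 * α)) ^ q) := by
      have := hsum' {h : ℤ | h ≠ 0 ∧ (p : ℤ) ∣ h * z}
      exact this.congr fun h => (hexp _ (abs_nonneg _)).symm
    have := real_tsum_rpow_le (fun h : {h : ℤ // h ≠ 0 ∧ (p : ℤ) ∣ h * z} =>
        |((h : ℤ) : ℝ)| ^ (-2 * α)) (fun h => Real.rpow_nonneg (abs_nonneg _) _) hq0 hq1 hs
    refine le_trans this (le_of_eq (tsum_congr fun h => hexp _ (abs_nonneg _)))
  -- bound for z = 0
  have hz0 : (∑' h : {h : ℤ // h ≠ 0 ∧ (p : ℤ) ∣ h * (0 : ℕ)}, |((h : ℤ) : ℝ)| ^ (-β)) = S := by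
    rw [hS]
    exact (((Equiv.subtypeEquivRight (fun h : ℤ => by simp)).tsum_eq
      fun h : {h : ℤ // h ≠ 0 ∧ (p : ℤ) ∣ h * ((0 : ℕ) : ℤ)} =>
      |((h : ℤ) : ℝ)| ^ (-β)).symm).trans (tsum_congr fun h => by
        simp [Equiv.subtypeEquivRight]
        rfl)
  -- bound for 0 < z < p
  have hp2 : (2 : ℝ) ≤ p := by exact_mod_cast hp.two_le
  have hp0 : (0 : ℝ) < p := by linarith
  have hzpos : ∀ z : ℕ, 0 < z → z < p →
      (∑' h : {h : ℤ // h ≠ 0 ∧ (p : ℤ) ∣ h * z}, |((h : ℤ) : ℝ)| ^ (-β)) ≤ (1 / p) * S := by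
    intro z hz1 hz2
    have hpz : ¬ ((p : ℤ) ∣ (z : ℤ)) := by
      intro hd
      have := Int.le_of_dvd (by exact_mod_cast hz1) hd
      omega
    -- injection from the subtype into {k ≠ 0}
    set i : {h : ℤ // h ≠ 0 ∧ (p : ℤ) ∣ h * z} → {k : ℤ // k ≠ 0} := fun h =>
      ⟨(h : ℤ) / p, by
        obtain ⟨h, hh0, hhd⟩ := h
        have hph : (p : ℤ) ∣ h := (Int.Prime.dvd_mul' hp hhd).resolve_right hpz
        simp only [ne_eq]
        intro hc
        apply hh0
        obtain ⟨c, rfl⟩ := hph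
        rw [Int.mul_ediv_cancel_left _ (by exact_mod_cast hp.pos.ne')] at hc
        simp [hc]⟩ with hi
    have hinj : Function.Injective i := by
      intro a b hab
      have hpa : (p : ℤ) ∣ (a : ℤ) :=
        (Int.Prime.dvd_mul' hp a.2.2).resolve_right hpz
      have hpb : (p : ℤ) ∣ (b : ℤ) :=
        (Int.Prime.dvd_mul' hp b.2.2).resolve_right hpz
      have : ((a : ℤ) / p) = ((b : ℤ) / p) := congrArg Subtype.val hab
      ext
      rw [← Int.ediv_mul_cancel hpa, ← Int.ediv_mul_cancel hpb, this]
    have hterm : ∀ h : {h : ℤ // h ≠ 0 ∧ (p : ℤ) ∣ h * z},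
        |((h : ℤ) : ℝ)| ^ (-β) ≤ (1 / p) * |(((i h : ℤ)) : ℝ)| ^ (-β) := by
      intro h
      have hph : (p : ℤ) ∣ (h : ℤ) :=
        (Int.Prime.dvd_mul' hp h.2.2).resolve_right hpz
      have hkey : ((h : ℤ) : ℝ) = p * (((i h : ℤ)) : ℝ) := by
        have : (h : ℤ) = p * ((h : ℤ) / p) := (Int.mul_ediv_cancel' hph).symm
        exact_mod_cast congrArg (fun x : ℤ => (x : ℝ)) this
      rw [hkey, abs_mul, abs_of_pos hp0,
        Real.mul_rpow hp0.le (abs_nonneg _)]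
      have h1 : (p : ℝ) ^ (-β) ≤ (p : ℝ) ^ (-1 : ℝ) :=
        Real.rpow_le_rpow_of_exponent_le (by linarith) (by linarith)
      have h2 : (p : ℝ) ^ (-1 : ℝ) = 1 / p := by
        rw [Real.rpow_neg_one]; ring
      have h3 : (0 : ℝ) ≤ |(((i h : ℤ)) : ℝ)| ^ (-β) := Real.rpow_nonneg (abs_nonneg _) _
      calc (p : ℝ) ^ (-β) * |(((i h : ℤ)) : ℝ)| ^ (-β)
          ≤ (p : ℝ) ^ (-1 : ℝ) * |(((i h : ℤ)) : ℝ)| ^ (-β) := by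
            exact mul_le_mul_of_nonneg_right h1 h3
        _ = (1 / p) * |(((i h : ℤ)) : ℝ)| ^ (-β) := by rw [h2]
    have hgs : Summable (fun k : {k : ℤ // k ≠ 0} => (1 / (p : ℝ)) * |((k : ℤ) : ℝ)| ^ (-β)) :=
      (hsum' {k : ℤ | k ≠ 0}).mul_left _
    calc (∑' h : {h : ℤ // h ≠ 0 ∧ (p : ℤ) ∣ h * z}, |((h : ℤ) : ℝ)| ^ (-β))
        ≤ ∑' k : {k : ℤ // k ≠ 0}, (1 / (p : ℝ)) * |((k : ℤ) : ℝ)| ^ (-β) :=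
          (hsum' _).tsum_le_tsum_of_inj i hinj
            (fun k _ => mul_nonneg (by positivity) (Real.rpow_nonneg (abs_nonneg _) _))
            hterm hgs
      _ = (1 / p) * S := by rw [hS, tsum_mul_left]
  -- put it together
  have hstep : ∑ z ∈ Finset.range p,
      (∑' h : {h : ℤ // h ≠ 0 ∧ (p : ℤ) ∣ h * z}, |((h : ℤ) : ℝ)| ^ (-2 * α)) ^ q ≤ 2 * S := by
    have hbound : ∀ z ∈ Finset.range p,
        (∑' h : {h : ℤ // h ≠ 0 ∧ (p : ℤ) ∣ h * z}, |((h : ℤ) : ℝ)| ^ (-2 * α)) ^ q ≤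
        if z = 0 then S else (1 / p) * S := by
      intro z hz
      rw [Finset.mem_range] at hz
      rcases Nat.eq_zero_or_pos z with h0 | h0
      · subst h0; simp only [if_pos rfl]
        exact le_trans (jensen 0) (le_of_eq hz0)
      · rw [if_neg h0.ne']
        exact le_trans (jensen z) (hzpos z h0 hz)
    calc ∑ z ∈ Finset.range p,
        (∑' h : {h : ℤ // h ≠ 0 ∧ (p : ℤ) ∣ h * z}, |((h : ℤ) : ℝ)| ^ (-2 * α)) ^ q
        ≤ ∑ z ∈ Finset.range p, (if z = 0 then S else (1 / p) * S) :=
          Finset.sum_le_sum hbound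
      _ = ∑ z ∈ Finset.range p, ((if z = 0 then S - (1 / p) * S else 0) + (1 / p) * S) := by
          refine Finset.sum_congr rfl fun z _ => ?_
          split <;> ring
      _ = (S - (1 / p) * S) + p * ((1 / p) * S) := by
          rw [Finset.sum_add_distrib,
            Finset.sum_ite_eq' (Finset.range p) 0 (fun _ => S - (1 / p) * S),
            Finset.sum_const, Finset.card_range]
          simp [Finset.mem_range, hp.pos, nsmul_eq_mul]
      _ ≤ 2 * S := by
          have hps : (p : ℝ) * ((1 / p) * S) = S := by field_simp
          rw [hps]
          have : 0 ≤ (1 / (p : ℝ)) * S := by positivity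
          linarith
  calc (1 / (p : ℝ)) * ∑ z ∈ Finset.range p,
      (∑' h : {h : ℤ // h ≠ 0 ∧ (p : ℤ) ∣ h * z}, |((h : ℤ) : ℝ)| ^ (-2 * α)) ^ q
      ≤ (1 / (p : ℝ)) * (2 * S) := by
        exact mul_le_mul_of_nonneg_left hstep (by positivity)
    _ = (2 / (p : ℝ)) * S := by ring
end

section
/- Let α > 1/2, d ≥ 1, and weights γ_u > 0 for subsets u of {1,…,d}. Define r(h) = γ_{supp(h)}^{-1} ∏_{j ∈ supp(h)} |h_j|^α for h ∈ Z^d, and μ(λ) = ∑_{h ≠ 0} r(h)^{-1/λ}. Then for any prime p and 1/2 ≤ λ < α, (1/p^d) ∑_{z ∈ (Z/pZ)^d} (∑_{h≠0, h·z ≡ 0 mod p} r(h)^{-2})^{1/(2λ)} ≤ (2/p) μ(λ). -/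
open scoped BigOperators Classical

lemma aux_tsum_rpow_le {ι : Type*} (g : ι → ℝ) (hg : ∀ i, 0 ≤ g i) (hs : Summable g)
    {r : ℝ} (hr : 1 ≤ r) : ∑' i, g i ^ r ≤ (∑' i, g i) ^ r := by
  set M := ∑' i, g i with hM
  have hM0 : 0 ≤ M := tsum_nonneg hg
  have hle : ∀ i, g i ^ r ≤ M ^ (r - 1) * g i := by
    intro i
    have h1 : g i ≤ M := Summable.le_tsum hs i (fun j _ => hg j)
    rcases eq_or_lt_of_le (hg i) with h0 | h0
    · rw [← h0, Real.zero_rpow (by linarith), mul_zero]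
    · calc g i ^ r = g i ^ (r - 1) * g i := by
            rw [← Real.rpow_add_one h0.ne' (r - 1), sub_add_cancel]
        _ ≤ M ^ (r - 1) * g i :=
            mul_le_mul_of_nonneg_right (Real.rpow_le_rpow (hg i) h1 (by linarith)) (hg i)
  have hsum2 : Summable (fun i => M ^ (r - 1) * g i) := hs.mul_left _
  have h2 : ∑' i, g i ^ r ≤ ∑' i, M ^ (r - 1) * g i :=
    Summable.tsum_le_tsum hle (Summable.of_nonneg_of_le (fun i => Real.rpow_nonneg (hg i) r) hle hsum2)
      hsum2
  rw [tsum_mul_left] at h2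
  rcases eq_or_lt_of_le hM0 with h0 | h0
  · have : ∀ i, g i = 0 := fun i =>
      le_antisymm (by rw [h0]; exact Summable.le_tsum hs i fun j _ => hg j) (hg i)
    calc ∑' i, g i ^ r = 0 := by
          simp only [this, Real.zero_rpow (by linarith : r ≠ 0)]; exact tsum_zero
      _ ≤ M ^ r := Real.rpow_nonneg hM0 r
  · calc ∑' i, g i ^ r ≤ M ^ (r - 1) * M := h2
      _ = M ^ r := by rw [← Real.rpow_add_one h0.ne' (r - 1), sub_add_cancel]

lemma aux_summable_pi (f : ℤ → ℝ) (hf0 : ∀ x, 0 ≤ f x) (hfs : Summable f) :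
    ∀ n : ℕ, Summable (fun x : Fin n → ℤ => ∏ j, f (x j)) := by
  intro n
  induction n with
  | zero => exact Summable.of_finite
  | succ n ih =>
    have h1 : Summable (fun x : ℤ × (Fin n → ℤ) => f x.1 * ∏ j, f (x.2 j)) :=
      Summable.mul_of_nonneg (f := f) (g := fun y : Fin n → ℤ => ∏ j, f (y j)) hfs ih hf0
        (fun x => Finset.prod_nonneg fun j _ => hf0 _)
    rw [← (Fin.consEquiv (fun _ : Fin (n + 1) => ℤ)).summable_iff]
    apply h1.congr
    rintro ⟨a, y⟩
    simp only [Function.comp_apply, Fin.consEquiv_apply]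
    rw [Fin.prod_univ_succ, Fin.cons_zero]
    simp only [Fin.cons_succ]

lemma aux_card_le {d : ℕ} {p : ℕ} [Fact p.Prime] (h : Fin d → ℤ) (j0 : Fin d)
    (hj : ((h j0 : ZMod p)) ≠ 0) :
    ((Finset.univ.filter fun z : Fin d → ZMod p =>
      ∑ j, ((h j : ZMod p) * z j) = 0)).card ≤ p ^ (d - 1) := by
  classical
  have key : ((Finset.univ.filter fun z : Fin d → ZMod p =>
      ∑ j, ((h j : ZMod p) * z j) = 0)).card ≤
      (Finset.univ : Finset ({j : Fin d // j ≠ j0} → ZMod p)).card := by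
    apply Finset.card_le_card_of_injOn (fun z => fun j => z j.1)
    · intro z _; exact Finset.mem_univ _
    · intro z hz z' hz' hzz
      simp only [Finset.mem_coe, Finset.mem_filter] at hz hz'
      have hagree : ∀ j : Fin d, j ≠ j0 → z j = z' j := by
        intro j hjj
        exact congrFun hzz ⟨j, hjj⟩
      funext j
      by_cases hjj : j = j0
      · subst hjj
        have e1 := hz.2
        have e2 := hz'.2
        rw [← Finset.add_sum_erase _ _ (Finset.mem_univ j)] at e1 e2
        have esum : ∑ i ∈ Finset.univ.erase j, (h i : ZMod p) * z i =
            ∑ i ∈ Finset.univ.erase j, (h i : ZMod p) * z' i :=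
          Finset.sum_congr rfl fun i hi => by
            rw [hagree i (Finset.ne_of_mem_erase hi)]
        rw [esum] at e1
        have : (h j : ZMod p) * z j = (h j : ZMod p) * z' j := by linear_combination e1 - e2
        exact mul_left_cancel₀ hj this
      · exact hagree j hjj
  rw [Finset.card_univ, Fintype.card_fun, ZMod.card] at key
  have hcard : Fintype.card {j : Fin d // j ≠ j0} = d - 1 := by
    have := Fintype.card_subtype_compl (fun j : Fin d => j = j0)
    simpa [Fintype.card_subtype_eq, Fintype.card_fin] using this
  rwa [hcard] at key

noncomputable def rK {d : ℕ} (α : ℝ) (γ : Finset (Fin d) → ℝ) (h : Fin d → ℤ) : ℝ :=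
  (γ (Finset.univ.filter fun j => h j ≠ 0))⁻¹ *
    ∏ j ∈ Finset.univ.filter (fun j => h j ≠ 0), (|h j| : ℝ) ^ α

noncomputable def muK {d : ℕ} (α : ℝ) (γ : Finset (Fin d) → ℝ) (lam : ℝ) : ℝ :=
  ∑' h : {h : Fin d → ℤ // h ≠ 0}, rK α γ h.1 ^ (-(1 / lam))

lemma aux_form {d : ℕ} (α : ℝ) (γ : Finset (Fin d) → ℝ) (hγ : ∀ u, 0 < γ u) (t : ℝ)
    (h : Fin d → ℤ) :
    rK α γ h ^ (-t) = (γ (Finset.univ.filter fun j => h j ≠ 0)) ^ t *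
      ∏ j ∈ Finset.univ.filter (fun j => h j ≠ 0), (|h j| : ℝ) ^ (-(α * t)) := by
  have habs : ∀ j ∈ (Finset.univ.filter fun j => h j ≠ 0), (0:ℝ) ≤ |((h j : ℤ) : ℝ)| := by
    intro j _; positivity
  have hprod : (0:ℝ) ≤ ∏ j ∈ Finset.univ.filter (fun j => h j ≠ 0), |((h j : ℤ) : ℝ)| ^ α :=
    Finset.prod_nonneg fun j hj => Real.rpow_nonneg (habs j hj) α
  rw [rK, Real.mul_rpow (inv_nonneg.mpr (hγ _).le) hprod,
    Real.inv_rpow (hγ _).le, Real.rpow_neg (hγ _).le, inv_inv]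
  congr 1
  rw [← Real.finset_prod_rpow _ _ (fun j hj => Real.rpow_nonneg (habs j hj) α) (-t)]
  apply Finset.prod_congr rfl
  intro j hj
  rw [← Real.rpow_mul (habs j hj), mul_neg]

lemma aux_rK_pos {d : ℕ} (α : ℝ) (γ : Finset (Fin d) → ℝ) (hγ : ∀ u, 0 < γ u)
    (h : Fin d → ℤ) : 0 < rK α γ h := by
  apply mul_pos (inv_pos.mpr (hγ _))
  apply Finset.prod_pos
  intro j hj
  apply Real.rpow_pos_of_pos
  simp only [Finset.mem_filter, Finset.mem_univ, true_and] at hj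
  simpa using abs_pos.mpr (Int.cast_ne_zero.mpr hj : ((h j : ℤ) : ℝ) ≠ 0)

theorem stmt7 (d : ℕ) (hd : 1 ≤ d) (α : ℝ) (hα : 1 / 2 < α)
    (γ : Finset (Fin d) → ℝ) (hγ : ∀ u, 0 < γ u)
    (p : ℕ) [Fact p.Prime] (lam : ℝ) (hlam1 : 1 / 2 ≤ lam) (hlam2 : lam < α) :
    (1 / (p : ℝ) ^ d) * ∑ z : Fin d → ZMod p,
        (∑' h : {h : Fin d → ℤ // h ≠ 0 ∧ ∑ j, ((h j : ZMod p) * z j) = 0},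
            rK α γ h.1 ^ (-2 : ℝ)) ^ (1 / (2 * lam)) ≤
      (2 / (p : ℝ)) * muK α γ lam := by
  classical
  have hp2 : 2 ≤ p := (Fact.out (p := p.Prime)).two_le
  have hpR : (0:ℝ) < p := by
    have : 0 < p := by omega
    exact_mod_cast this
  have hpR1 : (1:ℝ) ≤ p := by
    have : 1 ≤ p := by omega
    exact_mod_cast this
  have hpZ : ((p:ℤ)) ≠ 0 := by
    have : 0 < p := by omega
    exact_mod_cast this.ne'
  have hlam0 : 0 < lam := lt_of_lt_of_le (by norm_num) hlam1
  have hs1 : 1 < α * (1/lam) := by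
    rw [mul_one_div]; exact (one_lt_div hlam0).mpr hlam2
  set B : (Fin d → ℤ) → ℝ := fun h => if h = 0 then 0 else rK α γ h ^ (-(1/lam)) with hBdef
  have hB0 : ∀ h, 0 ≤ B h := by
    intro h
    by_cases h0 : h = 0 <;>
      simp [hBdef, h0, (Real.rpow_pos_of_pos (aux_rK_pos α γ hγ h) _).le]
  have hBform : ∀ h : Fin d → ℤ, h ≠ 0 →
      B h = (γ (Finset.univ.filter fun j => h j ≠ 0)) ^ (1/lam) *
        ∏ j ∈ Finset.univ.filter (fun j => h j ≠ 0), (|h j| : ℝ) ^ (-(α * (1/lam))) := by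
    intro h h0
    rw [hBdef]
    simp only [h0, if_false]
    exact aux_form α γ hγ (1/lam) h
  -- the single-variable comparison function
  set f : ℤ → ℝ := fun n => if n = 0 then 1 else |(n:ℝ)| ^ (-(α * (1/lam))) with hfdef
  have hf0 : ∀ n, 0 ≤ f n := by
    intro n
    rw [hfdef]
    by_cases hn : n = 0 <;> simp [hn, Real.rpow_nonneg (abs_nonneg _)]
  have hfs : Summable f := by
    have h1 : Summable (fun n : ℤ => |(n:ℝ)| ^ (-(α * (1/lam)))) :=
      Real.summable_abs_int_rpow hs1
    have h2 := h1.update 0 1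
    apply h2.congr
    intro n
    rw [Function.update_apply, hfdef]
  have hfpi : Summable (fun x : Fin d → ℤ => ∏ j, f (x j)) := aux_summable_pi f hf0 hfs d
  -- uniform bound on the weights
  set C : ℝ := ∑ u : Finset (Fin d), (γ u) ^ (1/lam) with hCdef
  have hC : ∀ u, (γ u) ^ (1/lam) ≤ C :=
    fun u => Finset.single_le_sum (fun v _ => Real.rpow_nonneg (hγ v).le _) (Finset.mem_univ u)
  have hBbound : ∀ h, B h ≤ C * ∏ j, f (h j) := by
    intro h
    have hprodf : 0 ≤ ∏ j, f (h j) := Finset.prod_nonneg fun j _ => hf0 _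
    have hC0 : 0 ≤ C := le_trans (Real.rpow_nonneg (hγ _).le _) (hC ∅)
    by_cases h0 : h = 0
    · simp only [hBdef, h0, if_true]
      positivity
    · rw [hBform h h0]
      have hprodeq : ∏ j ∈ Finset.univ.filter (fun j => h j ≠ 0),
          (|h j| : ℝ) ^ (-(α * (1/lam))) = ∏ j, f (h j) := by
        rw [Finset.prod_filter]
        apply Finset.prod_congr rfl
        intro j _
        by_cases hj : h j = 0 <;> simp [hfdef, hj]
      rw [hprodeq]
      exact mul_le_mul_of_nonneg_right (hC _) hprodf
  have hBsum : Summable B := Summable.of_nonneg_of_le hB0 hBbound (hfpi.mul_left C)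
  have hmu : muK α γ lam = ∑' h, B h := by
    have h1 : (∑' h : {h : Fin d → ℤ // h ≠ 0}, rK α γ h.1 ^ (-(1/lam))) =
        ∑' h, Set.indicator {h : Fin d → ℤ | h ≠ 0} (fun h => rK α γ h ^ (-(1/lam))) h :=
      tsum_subtype {h : Fin d → ℤ | h ≠ 0} (fun h => rK α γ h ^ (-(1/lam)))
    rw [muK, h1]
    apply tsum_congr
    intro h
    by_cases h0 : h = 0 <;> simp [Set.indicator_apply, hBdef, h0]
  -- the per-z function
  set F : (Fin d → ℤ) → (Fin d → ZMod p) → ℝ :=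
    fun h z => if (∑ j, ((h j : ZMod p) * z j)) = 0 then B h else 0 with hFdef
  have hF0 : ∀ h z, 0 ≤ F h z := by
    intro h z; rw [hFdef]; dsimp only; split
    · exact hB0 h
    · exact le_refl 0
  have hFle : ∀ h z, F h z ≤ B h := by
    intro h z
    rw [hFdef]; dsimp only; split
    · exact le_refl _
    · exact hB0 h
  have hFsum : ∀ z, Summable (fun h => F h z) :=
    fun z => Summable.of_nonneg_of_le (fun h => hF0 h z) (fun h => hFle h z) hBsum
  -- per-z estimate
  have hkeyz : ∀ z : Fin d → ZMod p,
      (∑' h : {h : Fin d → ℤ // h ≠ 0 ∧ ∑ j, ((h j : ZMod p) * z j) = 0},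
        rK α γ h.1 ^ (-2 : ℝ)) ^ (1 / (2 * lam)) ≤ ∑' h, F h z := by
    intro z
    have hsubB : Summable (fun h : {h : Fin d → ℤ // h ≠ 0 ∧ ∑ j, ((h j : ZMod p) * z j) = 0}
        => B h.1) := hBsum.subtype _
    have hsub0 : ∀ h : {h : Fin d → ℤ // h ≠ 0 ∧ ∑ j, ((h j : ZMod p) * z j) = 0},
        0 ≤ B h.1 := fun h => hB0 _
    have htr : (-(1/lam)) * (2*lam) = -2 := by
      field_simp
    have hrq : (2*lam) * (1/(2*lam)) = 1 := by
      field_simp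
    have e1 : (∑' h : {h : Fin d → ℤ // h ≠ 0 ∧ ∑ j, ((h j : ZMod p) * z j) = 0},
        rK α γ h.1 ^ (-2 : ℝ)) =
        ∑' h : {h : Fin d → ℤ // h ≠ 0 ∧ ∑ j, ((h j : ZMod p) * z j) = 0},
          (B h.1) ^ (2*lam) := by
      apply tsum_congr
      intro h
      have h0 : h.1 ≠ 0 := h.2.1
      have hB : B h.1 = rK α γ h.1 ^ (-(1/lam)) := by
        rw [hBdef]; dsimp only; rw [if_neg h0]
      rw [hB, ← Real.rpow_mul (aux_rK_pos α γ hγ h.1).le, htr]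
    have e2 : (∑' h : {h : Fin d → ℤ // h ≠ 0 ∧ ∑ j, ((h j : ZMod p) * z j) = 0},
        (B h.1) ^ (2*lam)) ≤
        (∑' h : {h : Fin d → ℤ // h ≠ 0 ∧ ∑ j, ((h j : ZMod p) * z j) = 0}, B h.1) ^ (2*lam) :=
      aux_tsum_rpow_le _ hsub0 hsubB (by linarith : (1:ℝ) ≤ 2*lam)
    have e3 : (∑' h : {h : Fin d → ℤ // h ≠ 0 ∧ ∑ j, ((h j : ZMod p) * z j) = 0}, B h.1)
        = ∑' h, F h z := by
      have h4 : (∑' h : {h : Fin d → ℤ // h ≠ 0 ∧ ∑ j, ((h j : ZMod p) * z j) = 0}, B h.1)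
          = ∑' h, Set.indicator
              {h : Fin d → ℤ | h ≠ 0 ∧ ∑ j, ((h j : ZMod p) * z j) = 0} B h :=
        tsum_subtype {h : Fin d → ℤ | h ≠ 0 ∧ ∑ j, ((h j : ZMod p) * z j) = 0} B
      rw [h4]
      apply tsum_congr
      intro h
      rw [Set.indicator_apply, hFdef]
      by_cases h0 : h = 0
      · by_cases heq : (∑ j, ((h j : ZMod p) * z j)) = 0 <;> simp [h0, heq, hBdef]
      · by_cases heq : (∑ j, ((h j : ZMod p) * z j)) = 0 <;> simp [h0, heq]
    have hT0 : 0 ≤ ∑' h : {h : Fin d → ℤ // h ≠ 0 ∧ ∑ j, ((h j : ZMod p) * z j) = 0}, B h.1 :=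
      tsum_nonneg hsub0
    calc (∑' h : {h : Fin d → ℤ // h ≠ 0 ∧ ∑ j, ((h j : ZMod p) * z j) = 0},
            rK α γ h.1 ^ (-2 : ℝ)) ^ (1 / (2 * lam))
        = (∑' h : {h : Fin d → ℤ // h ≠ 0 ∧ ∑ j, ((h j : ZMod p) * z j) = 0},
            (B h.1) ^ (2*lam)) ^ (1 / (2 * lam)) := by rw [e1]
      _ ≤ ((∑' h : {h : Fin d → ℤ // h ≠ 0 ∧ ∑ j, ((h j : ZMod p) * z j) = 0},
            B h.1) ^ (2*lam)) ^ (1 / (2 * lam)) :=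
          Real.rpow_le_rpow (tsum_nonneg fun h => Real.rpow_nonneg (hsub0 h) _) e2
            (by positivity)
      _ = ∑' h : {h : Fin d → ℤ // h ≠ 0 ∧ ∑ j, ((h j : ZMod p) * z j) = 0}, B h.1 := by
          rw [← Real.rpow_mul hT0, hrq, Real.rpow_one]
      _ = ∑' h, F h z := e3
  -- the set of vectors divisible by p
  set P : Set (Fin d → ℤ) := {h | ∀ j, ((p:ℤ)) ∣ h j} with hPdef
  have hPind0 : ∀ h, 0 ≤ Set.indicator P B h :=
    fun h => Set.indicator_nonneg (fun a _ => hB0 a) h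
  have hcount : ∀ h, (1/(p:ℝ)^d) * ∑ z : Fin d → ZMod p, F h z ≤
      B h * (1/p) + Set.indicator P B h := by
    intro h
    by_cases hall : ∀ j, ((h j : ZMod p)) = 0
    · have hmem : h ∈ P := by
        intro j
        exact (ZMod.intCast_zmod_eq_zero_iff_dvd (h j) p).mp (hall j)
      have h1 : ∑ z : Fin d → ZMod p, F h z ≤ ∑ _z : Fin d → ZMod p, B h :=
        Finset.sum_le_sum fun z _ => hFle h z
      have hcardfun : (Finset.univ : Finset (Fin d → ZMod p)).card = p ^ d := by
        rw [Finset.card_univ, Fintype.card_fun, ZMod.card, Fintype.card_fin]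
      have h2 : ∑ _z : Fin d → ZMod p, B h = (p:ℝ)^d * B h := by
        rw [Finset.sum_const, hcardfun, nsmul_eq_mul]
        push_cast
        ring
      have h3 : (1/(p:ℝ)^d) * ((p:ℝ)^d * B h) = B h := by
        field_simp
      calc (1/(p:ℝ)^d) * ∑ z : Fin d → ZMod p, F h z
          ≤ (1/(p:ℝ)^d) * ((p:ℝ)^d * B h) := by
            rw [← h2]
            exact mul_le_mul_of_nonneg_left h1 (by positivity)
        _ = B h := h3
        _ ≤ B h * (1/p) + Set.indicator P B h := by
            rw [Set.indicator_of_mem hmem]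
            have hbp : 0 ≤ B h * (1/p) := mul_nonneg (hB0 h) (by positivity)
            linarith
    · push_neg at hall
      obtain ⟨j0, hj0⟩ := hall
      have hFz : ∀ z : Fin d → ZMod p, F h z =
          B h * (if (∑ j, ((h j : ZMod p) * z j)) = 0 then (1:ℝ) else 0) := by
        intro z; rw [hFdef]; dsimp only; split <;> simp
      have h1 : ∑ z : Fin d → ZMod p, F h z =
          B h * (((Finset.univ.filter fun z : Fin d → ZMod p =>
            ∑ j, ((h j : ZMod p) * z j) = 0)).card : ℝ) := by
        simp_rw [hFz]
        rw [← Finset.mul_sum, Finset.sum_boole]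
      have h2 : (((Finset.univ.filter fun z : Fin d → ZMod p =>
          ∑ j, ((h j : ZMod p) * z j) = 0)).card : ℝ) ≤ (p:ℝ)^(d-1) := by
        exact_mod_cast aux_card_le h j0 hj0
      have h3 : (1/(p:ℝ)^d) * ((p:ℝ)^(d-1)) = 1/p := by
        have hd1 : (p:ℝ)^d = (p:ℝ)^(d-1) * p := by
          rw [← pow_succ]
          congr 1
          omega
        rw [hd1]
        field_simp
      calc (1/(p:ℝ)^d) * ∑ z : Fin d → ZMod p, F h z
          = (1/(p:ℝ)^d) * (B h * (((Finset.univ.filter fun z : Fin d → ZMod p =>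
              ∑ j, ((h j : ZMod p) * z j) = 0)).card : ℝ)) := by rw [h1]
        _ ≤ (1/(p:ℝ)^d) * (B h * (p:ℝ)^(d-1)) :=
            mul_le_mul_of_nonneg_left (mul_le_mul_of_nonneg_left h2 (hB0 h)) (by positivity)
        _ = B h * ((1/(p:ℝ)^d) * ((p:ℝ)^(d-1))) := by ring
        _ = B h * (1/p) := by rw [h3]
        _ ≤ B h * (1/p) + Set.indicator P B h := le_add_of_nonneg_right (hPind0 h)
  -- the p-divisible part
  have hPle : ∑' h, Set.indicator P B h ≤ (1/(p:ℝ)) * ∑' h, B h := by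
    set φ : (Fin d → ℤ) → (Fin d → ℤ) := fun h' => fun j => (p:ℤ) * h' j with hφdef
    have hφinj : Function.Injective φ := by
      intro a b hab
      funext j
      exact mul_left_cancel₀ hpZ (congrFun hab j)
    have hrange : Function.support (Set.indicator P B) ⊆ Set.range φ := by
      intro x hx
      have hxP : x ∈ P := by
        by_contra hc
        exact hx (Set.indicator_of_notMem hc B)
      exact ⟨fun j => x j / p, funext fun j => Int.mul_ediv_cancel' (hxP j)⟩
    have h1 : ∑' h', Set.indicator P B (φ h') = ∑' h, Set.indicator P B h :=
      hφinj.tsum_eq hrange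
    have h2 : ∀ h', Set.indicator P B (φ h') = B (φ h') := by
      intro h'
      apply Set.indicator_of_mem
      intro j
      exact ⟨h' j, rfl⟩
    have hkey : ∀ h', B (φ h') ≤ (1/(p:ℝ)) * B h' := by
      intro h'
      by_cases h0 : h' = 0
      · subst h0
        have hz : φ 0 = 0 := funext fun j => mul_zero _
        rw [hz]
        simp [hBdef]
      · have hφ0 : φ h' ≠ 0 := by
          intro hc
          apply h0
          funext j
          have hcc := congrFun hc j
          simp only [hφdef, Pi.zero_apply] at hcc
          rcases mul_eq_zero.mp hcc with hpp | hh
          · exact absurd hpp hpZ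
          · simpa using hh
        have hsupp : (Finset.univ.filter fun j => φ h' j ≠ 0) =
            (Finset.univ.filter fun j => h' j ≠ 0) := by
          apply Finset.filter_congr
          intro j _
          simp [hφdef, mul_eq_zero, hpZ]
          exact fun _ => by omega
        rw [hBform _ hφ0, hBform _ h0, hsupp]
        have hfac : ∀ j ∈ (Finset.univ.filter fun j : Fin d => h' j ≠ 0),
            (|φ h' j| : ℝ) ^ (-(α * (1/lam))) =
              ((p:ℝ) ^ (-(α * (1/lam)))) * (|h' j| : ℝ) ^ (-(α * (1/lam))) := by
          intro j _
          have hcast : ((φ h' j : ℤ) : ℝ) = (p:ℝ) * ((h' j : ℤ) : ℝ) := by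
            simp [hφdef]
          rw [hcast, abs_mul, abs_of_pos hpR,
            Real.mul_rpow hpR.le (abs_nonneg _)]
        rw [Finset.prod_congr rfl hfac, Finset.prod_mul_distrib, Finset.prod_const]
        have hcard1 : 1 ≤ (Finset.univ.filter fun j : Fin d => h' j ≠ 0).card := by
          rw [Nat.one_le_iff_ne_zero, Ne, Finset.card_eq_zero]
          intro hcc
          apply h0
          funext j
          simp only [Pi.zero_apply]
          by_contra hj
          have hjj : j ∈ Finset.univ.filter fun j : Fin d => h' j ≠ 0 := by
            simp [hj]
          rw [hcc] at hjj
          exact absurd hjj (Finset.notMem_empty j)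
        have hps1 : (p:ℝ) ^ (-(α * (1/lam))) ≤ 1/(p:ℝ) := by
          have hh := Real.rpow_le_rpow_of_exponent_le hpR1
            (by linarith : -(α * (1/lam)) ≤ -1)
          rwa [Real.rpow_neg_one, ← one_div] at hh
        have hps2 : ((p:ℝ) ^ (-(α * (1/lam)))) ^
            (Finset.univ.filter fun j : Fin d => h' j ≠ 0).card ≤ 1/(p:ℝ) := by
          have ha1 : (p:ℝ) ^ (-(α * (1/lam))) ≤ 1 :=
            le_trans hps1 ((div_le_one hpR).mpr hpR1)
          calc ((p:ℝ) ^ (-(α * (1/lam)))) ^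
              (Finset.univ.filter fun j : Fin d => h' j ≠ 0).card
              ≤ ((p:ℝ) ^ (-(α * (1/lam)))) ^ 1 :=
                pow_le_pow_of_le_one (Real.rpow_nonneg hpR.le _) ha1 hcard1
            _ = (p:ℝ) ^ (-(α * (1/lam))) := pow_one _
            _ ≤ 1/(p:ℝ) := hps1
        set G := γ (Finset.univ.filter fun j : Fin d => h' j ≠ 0) ^ (1/lam) with hGdef
        set Q := ∏ j ∈ Finset.univ.filter (fun j : Fin d => h' j ≠ 0),
          (|h' j| : ℝ) ^ (-(α * (1/lam))) with hQdef
        set X := (p:ℝ) ^ (-(α * (1/lam))) with hXdef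
        set c := (Finset.univ.filter fun j : Fin d => h' j ≠ 0).card with hcdef
        have hG0 : 0 ≤ G := Real.rpow_nonneg (hγ _).le _
        have hQ0 : 0 ≤ Q := Finset.prod_nonneg fun j _ =>
          Real.rpow_nonneg (abs_nonneg _) _
        have hmain : X ^ c * (G * Q) ≤ 1/(p:ℝ) * (G * Q) :=
          mul_le_mul_of_nonneg_right hps2 (mul_nonneg hG0 hQ0)
        have heq : G * (X ^ c * Q) = X ^ c * (G * Q) := by ring
        rw [heq]
        exact hmain
    have hsummable1 : Summable (fun h' => B (φ h')) := hBsum.comp_injective hφinj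
    calc ∑' h, Set.indicator P B h = ∑' h', B (φ h') := by
          rw [← h1]
          exact tsum_congr h2
      _ ≤ ∑' h', (1/(p:ℝ)) * B h' :=
          Summable.tsum_le_tsum hkey hsummable1 (hBsum.mul_left _)
      _ = (1/(p:ℝ)) * ∑' h, B h := tsum_mul_left
  -- assembly
  have hsumR : Summable (fun h => B h * (1/(p:ℝ)) + Set.indicator P B h) :=
    (hBsum.mul_right _).add (hBsum.indicator P)
  have hsumL : Summable (fun h => (1/(p:ℝ)^d) * ∑ z : Fin d → ZMod p, F h z) :=
    Summable.of_nonneg_of_le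
      (fun h => mul_nonneg (by positivity) (Finset.sum_nonneg fun z _ => hF0 h z))
      hcount hsumR
  calc (1 / (p : ℝ) ^ d) * ∑ z : Fin d → ZMod p,
        (∑' h : {h : Fin d → ℤ // h ≠ 0 ∧ ∑ j, ((h j : ZMod p) * z j) = 0},
            rK α γ h.1 ^ (-2 : ℝ)) ^ (1 / (2 * lam))
      ≤ (1 / (p : ℝ) ^ d) * ∑ z : Fin d → ZMod p, ∑' h, F h z :=
        mul_le_mul_of_nonneg_left (Finset.sum_le_sum fun z _ => hkeyz z) (by positivity)
    _ = (1 / (p : ℝ) ^ d) * ∑' h, ∑ z : Fin d → ZMod p, F h z := by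
        rw [Summable.tsum_finsetSum (fun z _ => hFsum z)]
    _ = ∑' h, (1 / (p : ℝ) ^ d) * ∑ z : Fin d → ZMod p, F h z := (tsum_mul_left).symm
    _ ≤ ∑' h, (B h * (1/(p:ℝ)) + Set.indicator P B h) := Summable.tsum_le_tsum hcount hsumL hsumR
    _ = (∑' h, B h) * (1/(p:ℝ)) + ∑' h, Set.indicator P B h := by
        rw [Summable.tsum_add (hBsum.mul_right _) (hBsum.indicator P), tsum_mul_right]
    _ ≤ (∑' h, B h) * (1/(p:ℝ)) + (1/(p:ℝ)) * ∑' h, B h := by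
        exact add_le_add_right hPle _
    _ = (2 / (p:ℝ)) * muK α γ lam := by rw [hmu]; ring
end

section
/- Let α > 1/2, d ≥ 1, weights γ_u > 0, r(h) = γ_{supp(h)}^{-1} ∏_{j∈supp(h)} |h_j|^α, and μ(λ) = ∑_{h≠0} r(h)^{-1/λ}. For any prime p there exists a vector z* ∈ (Z/pZ)^d such that for all λ ∈ [1/2, α), ∑_{h ∈ Z^d \ {0}, h·z* ≡ 0 mod p} r(h)^{-2} ≤ ((2/p) μ(λ))^{2λ}. -/
open scoped BigOperators Classical

lemma rK_pos {d : ℕ} {α : ℝ} {γ : Finset (Fin d) → ℝ} (hγ : ∀ u, 0 < γ u)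
    (h : Fin d → ℤ) : 0 < rK α γ h := by
  refine mul_pos (inv_pos.2 (hγ _)) (Finset.prod_pos ?_)
  intro j hj
  have hj' : h j ≠ 0 := (Finset.mem_filter.1 hj).2
  have : (0:ℝ) < (|h j| : ℝ) := by exact_mod_cast abs_pos.2 hj'
  exact Real.rpow_pos_of_pos this _

lemma summable_g {b : ℝ} (hb : 1 < b) :
    Summable (fun k : ℤ => if k = 0 then (1:ℝ) else |(k:ℝ)| ^ (-b)) := by
  have h := (Real.summable_abs_int_rpow hb).update 0 1
  refine h.congr fun k => ?_
  rcases eq_or_ne k 0 with rfl | hk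
  · simp [Function.update]
  · simp [Function.update, hk]

lemma summable_pi {g : ℤ → ℝ} (hg : Summable g) (hg0 : ∀ k, 0 ≤ g k) :
    ∀ n : ℕ, Summable (fun h : Fin n → ℤ => ∏ j, g (h j)) := by
  intro n
  induction n with
  | zero => exact Summable.of_finite
  | succ n ih =>
    have key := hg.mul_of_nonneg ih (fun k => hg0 k)
      (fun h => Finset.prod_nonneg fun j _ => hg0 _)
    rw [← (Fin.consEquiv (fun _ : Fin (n+1) => ℤ)).summable_iff]
    refine key.congr fun x => ?_
    show g x.1 * ∏ j, g (x.2 j) = ∏ j : Fin (n+1), g ((Fin.cons x.1 x.2 : ∀ _ : Fin (n+1), ℤ) j)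
    have : (fun j : Fin (n+1) => g ((Fin.cons x.1 x.2 : ∀ _ : Fin (n+1), ℤ) j))
        = Fin.cons (g x.1) (g ∘ x.2) := by
      rw [← Fin.comp_cons]; rfl
    rw [this]
    exact (Fin.prod_cons (g x.1) (g ∘ x.2)).symm
lemma summable_F {d : ℕ} {α : ℝ} {γ : Finset (Fin d) → ℝ} (hγ : ∀ u, 0 < γ u)
    {t : ℝ} (ht : 1 < α * t) (hα0 : 0 < α) :
    Summable (fun h : Fin d → ℤ => rK α γ h ^ (-t)) := by
  set b := α * t with hb
  set g : ℤ → ℝ := fun k => if k = 0 then (1:ℝ) else |(k:ℝ)| ^ (-b) with hgdef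
  have hg0 : ∀ k, 0 ≤ g k := by
    intro k; rw [hgdef]; dsimp only; split
    · norm_num
    · positivity
  have hgs : Summable g := summable_g ht
  set C : ℝ := ∑ u : Finset (Fin d), γ u ^ t with hC
  have hsum := (summable_pi hgs hg0 d).mul_left C
  refine Summable.of_nonneg_of_le
    (fun h => Real.rpow_nonneg (rK_pos hγ h).le _) (fun h => ?_) hsum
  set u := Finset.univ.filter fun j => h j ≠ 0 with hu
  have hbase : ∀ j ∈ u, (0:ℝ) < (|h j| : ℝ) := by
    intro j hj
    have hj' : h j ≠ 0 := (Finset.mem_filter.1 hj).2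
    exact_mod_cast abs_pos.2 hj'
  have hP0 : (0:ℝ) ≤ ∏ j ∈ u, (|h j|:ℝ) ^ α :=
    Finset.prod_nonneg fun j hj => Real.rpow_nonneg (hbase j hj).le _
  have h1 : rK α γ h ^ (-t) = γ u ^ t * ∏ j ∈ u, (|h j|:ℝ) ^ (-b) := by
    rw [show rK α γ h = (γ u)⁻¹ * ∏ j ∈ u, (|h j|:ℝ) ^ α from rfl]
    rw [Real.mul_rpow (inv_nonneg.2 (hγ u).le) hP0,
      Real.inv_rpow (hγ u).le, Real.rpow_neg (hγ u).le, inv_inv]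
    congr 1
    rw [← Real.finset_prod_rpow u _ (fun j hj => Real.rpow_nonneg (hbase j hj).le _) (-t)]
    refine Finset.prod_congr rfl fun j hj => ?_
    rw [← Real.rpow_mul (hbase j hj).le, hb]
    ring_nf
  have h2 : ∏ j ∈ u, (|h j|:ℝ) ^ (-b) = ∏ j : Fin d, g (h j) := by
    have hcong : ∀ j ∈ u, (|h j| : ℝ) ^ (-b) = g (h j) := by
      intro j hj
      have hj' : h j ≠ 0 := (Finset.mem_filter.1 hj).2
      simp [hgdef, hj', Int.cast_abs]
    rw [Finset.prod_congr rfl hcong]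
    refine Finset.prod_subset (Finset.subset_univ u) ?_
    intro j _ hj
    have hj0 : h j = 0 := by
      by_contra hne
      exact hj (Finset.mem_filter.2 ⟨Finset.mem_univ _, hne⟩)
    simp [hgdef, hj0]
  have h3 : γ u ^ t ≤ C :=
    Finset.single_le_sum (f := fun v => γ v ^ t)
      (fun v _ => Real.rpow_nonneg (hγ v).le t) (Finset.mem_univ u)
  rw [h1, h2]
  exact mul_le_mul_of_nonneg_right h3 (Finset.prod_nonneg fun j _ => hg0 _)

lemma rK_smul {d : ℕ} {α : ℝ} {γ : Finset (Fin d) → ℝ} (hγ : ∀ u, 0 < γ u)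
    (hα0 : 0 < α) {m : Fin d → ℤ} (hm : m ≠ 0) {p : ℕ} (hp : 1 ≤ p) :
    (p:ℝ) ^ α * rK α γ m ≤ rK α γ (fun j => (p:ℤ) * m j) := by
  have hp0 : (0:ℝ) < p := by exact_mod_cast hp
  have hpne : (p:ℤ) ≠ 0 := by exact_mod_cast Nat.one_le_iff_ne_zero.1 hp
  have hrKm := rK_pos (α := α) hγ m
  have hfilter : (Finset.univ.filter fun j => (p:ℤ) * m j ≠ 0)
      = Finset.univ.filter fun j => m j ≠ 0 := by
    refine Finset.filter_congr fun j _ => ?_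
    simp [mul_ne_zero_iff, hpne, Nat.one_le_iff_ne_zero.1 hp]
  simp only [rK] at hrKm ⊢
  rw [hfilter]
  set u := Finset.univ.filter fun j => m j ≠ 0 with hu
  have hune : u.Nonempty := by
    obtain ⟨j, hj⟩ := Function.ne_iff.1 hm
    exact ⟨j, Finset.mem_filter.2 ⟨Finset.mem_univ _, hj⟩⟩
  have hfac : ∀ j ∈ u, |((((p:ℤ) * m j : ℤ)) : ℝ)| ^ α
      = (p:ℝ) ^ α * |((m j : ℤ) : ℝ)| ^ α := by
    intro j hj
    have habs : |((((p:ℤ) * m j : ℤ)) : ℝ)| = (p:ℝ) * |((m j : ℤ) : ℝ)| := by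
      push_cast [abs_mul]
      simp [abs_of_nonneg hp0.le]
    rw [habs, Real.mul_rpow hp0.le (abs_nonneg _)]
  rw [Finset.prod_congr rfl hfac, Finset.prod_mul_distrib, Finset.prod_const]
  have h1 : (p:ℝ) ^ α ≤ ((p:ℝ) ^ α) ^ u.card := by
    refine le_self_pow₀ ?_ (Finset.card_ne_zero_of_mem hune.choose_spec)
    calc (1:ℝ) = (p:ℝ) ^ (0:ℝ) := (Real.rpow_zero _).symm
      _ ≤ (p:ℝ) ^ α := Real.rpow_le_rpow_of_exponent_le (by exact_mod_cast hp) hα0.le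
  have hrest : 0 ≤ (γ u)⁻¹ * ∏ j ∈ u, |((m j : ℤ) : ℝ)| ^ α := le_of_lt hrKm
  calc (p:ℝ) ^ α * ((γ u)⁻¹ * ∏ j ∈ u, |((m j : ℤ) : ℝ)| ^ α)
      ≤ ((p:ℝ) ^ α) ^ u.card * ((γ u)⁻¹ * ∏ j ∈ u, |((m j : ℤ) : ℝ)| ^ α) :=
        mul_le_mul_of_nonneg_right h1 hrest
    _ = (γ u)⁻¹ * (((p:ℝ) ^ α) ^ u.card * ∏ j ∈ u, |((m j : ℤ) : ℝ)| ^ α) := by ring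

lemma add_rpow_le' {x y q : ℝ} (hx : 0 ≤ x) (hy : 0 ≤ y) (hq : 1 ≤ q) :
    x ^ q + y ^ q ≤ (x + y) ^ q := by
  have h := NNReal.add_rpow_le_rpow_add x.toNNReal y.toNNReal hq
  rw [← NNReal.coe_le_coe] at h
  simpa [NNReal.coe_rpow, Real.coe_toNNReal x hx, Real.coe_toNNReal y hy] using h

lemma sum_rpow_le' {ι : Type*} (s : Finset ι) (f : ι → ℝ) (hf : ∀ i, 0 ≤ f i)
    {q : ℝ} (hq : 1 ≤ q) :
    ∑ i ∈ s, f i ^ q ≤ (∑ i ∈ s, f i) ^ q := by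
  classical
  induction s using Finset.induction_on with
  | empty => simp [Real.zero_rpow (by linarith : q ≠ 0)]
  | @insert a s ha ih =>
    rw [Finset.sum_insert ha, Finset.sum_insert ha]
    calc f a ^ q + ∑ i ∈ s, f i ^ q ≤ f a ^ q + (∑ i ∈ s, f i) ^ q := by linarith
      _ ≤ (f a + ∑ i ∈ s, f i) ^ q :=
        add_rpow_le' (hf a) (Finset.sum_nonneg fun i _ => hf i) hq

lemma tsum_rpow_le' {ι : Type*} {f : ι → ℝ} (hf : ∀ i, 0 ≤ f i) (hs : Summable f)
    {q : ℝ} (hq : 1 ≤ q) (hsq : Summable fun i => f i ^ q) :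
    ∑' i, f i ^ q ≤ (∑' i, f i) ^ q := by
  refine Summable.tsum_le_of_sum_le hsq fun s => ?_
  refine (sum_rpow_le' s f hf hq).trans ?_
  exact Real.rpow_le_rpow (Finset.sum_nonneg fun i _ => hf i)
    (Summable.sum_le_tsum s (fun i _ => hf i) hs) (by linarith)

lemma card_ker_le {d : ℕ} (p : ℕ) [Fact p.Prime] {c : Fin d → ZMod p} (hc : c ≠ 0) :
    (Finset.univ.filter fun z : Fin d → ZMod p => ∑ j, c j * z j = 0).card ≤ p ^ (d - 1) := by
  haveI : NeZero p := ⟨(Fact.out : p.Prime).ne_zero⟩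
  obtain ⟨j0, hj0⟩ : ∃ j, c j ≠ 0 := Function.ne_iff.1 hc
  rw [← Fintype.card_subtype]
  have hinj : Function.Injective (fun z : {z : Fin d → ZMod p // ∑ j, c j * z j = 0} =>
      (fun j : {j : Fin d // ¬ j = j0} => z.1 j.1)) := by
    intro z w hzw
    have hoff : ∀ j, j ≠ j0 → z.1 j = w.1 j := fun j hj => congrFun hzw ⟨j, hj⟩
    have hsz : ∑ j ∈ Finset.univ.erase j0, c j * z.1 j + c j0 * z.1 j0 = 0 := by
      rw [Finset.sum_erase_add _ _ (Finset.mem_univ j0)]; exact z.2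
    have hsw : ∑ j ∈ Finset.univ.erase j0, c j * w.1 j + c j0 * w.1 j0 = 0 := by
      rw [Finset.sum_erase_add _ _ (Finset.mem_univ j0)]; exact w.2
    have hsame : ∑ j ∈ Finset.univ.erase j0, c j * z.1 j
        = ∑ j ∈ Finset.univ.erase j0, c j * w.1 j :=
      Finset.sum_congr rfl fun j hj => by rw [hoff j (Finset.ne_of_mem_erase hj)]
    have hmul : c j0 * z.1 j0 = c j0 * w.1 j0 := by
      have h1 := eq_neg_of_add_eq_zero_right hsz
      have h2 := eq_neg_of_add_eq_zero_right hsw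
      rw [h1, h2, hsame]
    have hj0eq : z.1 j0 = w.1 j0 := mul_left_cancel₀ hj0 hmul
    apply Subtype.ext; funext j
    rcases eq_or_ne j j0 with rfl | hne
    · exact hj0eq
    · exact hoff j hne
  calc Fintype.card {z : Fin d → ZMod p // ∑ j, c j * z j = 0}
      ≤ Fintype.card ({j : Fin d // ¬ j = j0} → ZMod p) := Fintype.card_le_of_injective _ hinj
    _ = p ^ (d - 1) := by
        rw [Fintype.card_fun, ZMod.card, Fintype.card_subtype_compl,
          Fintype.card_subtype_eq, Fintype.card_fin]
theorem stmt8 (d : ℕ) (hd : 1 ≤ d) (α : ℝ) (hα : 1 / 2 < α)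
    (γ : Finset (Fin d) → ℝ) (hγ : ∀ u, 0 < γ u)
    (p : ℕ) [Fact p.Prime] :
    ∃ z : Fin d → ZMod p, ∀ lam : ℝ, 1 / 2 ≤ lam → lam < α →
      (∑' h : {h : Fin d → ℤ // h ≠ 0 ∧ ∑ j, ((h j : ZMod p) * z j) = 0},
          rK α γ h.1 ^ (-2 : ℝ)) ≤
        ((2 / (p : ℝ)) * muK α γ lam) ^ (2 * lam) := by
  classical
  have hp : p.Prime := Fact.out
  haveI : NeZero p := ⟨hp.ne_zero⟩
  have hp1 : (1:ℝ) ≤ p := by exact_mod_cast hp.one_lt.le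
  have hp1' : 1 ≤ p := hp.one_lt.le
  have hp0 : (0:ℝ) < p := lt_of_lt_of_le one_pos hp1
  have hα0 : (0:ℝ) < α := by linarith
  set F : ℝ → (Fin d → ℤ) → ℝ := fun t h => rK α γ h ^ (-t) with hF
  have hFpos : ∀ (t : ℝ) h, 0 < F t h := fun t h => Real.rpow_pos_of_pos (rK_pos hγ h) _
  have hFs : ∀ t : ℝ, 1 < α * t → Summable (F t) := fun t h1 => summable_F hγ h1 hα0
  have hs2 : Summable (F 2) := hFs 2 (by linarith)
  set T : Set (Fin d → ℤ) := {h | h ≠ 0} with hT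
  set S : (Fin d → ZMod p) → Set (Fin d → ℤ) :=
    fun z => {h | h ≠ 0 ∧ ∑ j, ((h j : ZMod p) * z j) = 0} with hS
  set D : Set (Fin d → ℤ) := {h | h ≠ 0 ∧ ∀ j, ((h j : ZMod p) = 0)} with hD
  set e : ℝ → (Fin d → ZMod p) → ℝ := fun t z => ∑' h, (S z).indicator (F t) h with he
  set M : ℝ → ℝ := fun t => ∑' h, T.indicator (F t) h with hM
  have hindnn : ∀ (A : Set (Fin d → ℤ)) (t : ℝ) h, 0 ≤ A.indicator (F t) h :=
    fun A t h => Set.indicator_nonneg (fun x _ => (hFpos t x).le) h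
  have hcardfun : Fintype.card (Fin d → ZMod p) = p ^ d := by
    rw [Fintype.card_fun, ZMod.card, Fintype.card_fin]
  -- Averaging claim
  have key : ∀ t : ℝ, 1 < α * t → ∃ z : Fin d → ZMod p, e t z ≤ 2 / p * M t := by
    intro t hαt
    have hst : Summable (F t) := hFs t hαt
    have ht0 : 0 < t := by nlinarith
    have hMt0 : 0 ≤ M t := tsum_nonneg (hindnn T t)
    set N : (Fin d → ℤ) → ℕ :=
      fun h => (Finset.univ.filter fun z : Fin d → ZMod p => h ∈ S z).card with hN
    have step1 : ∑ z : Fin d → ZMod p, e t z = ∑' h, (N h : ℝ) * F t h := by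
      rw [he]
      rw [← Summable.tsum_finsetSum (fun z _ => hst.indicator (S z))]
      refine tsum_congr fun h => ?_
      simp only [Set.indicator_apply]
      rw [← Finset.sum_filter, Finset.sum_const, nsmul_eq_mul, hN]
    have hdiv : ∑' h, D.indicator (F t) h ≤ (p:ℝ)⁻¹ * M t := by
      set i : (Fin d → ℤ) → (Fin d → ℤ) := fun m j => (p:ℤ) * m j with hi
      have hiinj : Function.Injective i := by
        intro a b hab; funext j
        have := congrFun hab j
        exact mul_left_cancel₀ (by exact_mod_cast hp.ne_zero : (p:ℤ) ≠ 0) this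
      have hsupp : Function.support (D.indicator (F t)) ⊆ Set.range i := by
        intro h hh
        have hmem : h ∈ D := by
          by_contra hcon; exact hh (Set.indicator_of_notMem hcon _)
        obtain ⟨hne, hdvd⟩ := hmem
        refine ⟨fun j => h j / p, funext fun j => ?_⟩
        have hdj : (p:ℤ) ∣ h j := (ZMod.intCast_zmod_eq_zero_iff_dvd _ _).1 (hdvd j)
        exact Int.mul_ediv_cancel' hdj
      have hbound : ∀ m, D.indicator (F t) (i m) ≤ (p:ℝ)⁻¹ * T.indicator (F t) m := by
        intro m
        rcases eq_or_ne m 0 with rfl | hm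
        · have hi0 : i 0 = 0 := funext fun j => by simp [hi]
          rw [hi0, Set.indicator_of_notMem (by simp [hD] : (0 : Fin d → ℤ) ∉ D),
            Set.indicator_of_notMem (by simp [hT] : (0 : Fin d → ℤ) ∉ T)]
          simp
        · have him : i m ∈ D := by
            constructor
            · intro hcon
              apply hm
              funext j
              have := congrFun hcon j
              simp only [hi, Pi.zero_apply] at this ⊢
              exact mul_left_cancel₀ (by exact_mod_cast hp.ne_zero : (p:ℤ) ≠ 0)
                (by rw [this]; ring)
            · intro j
              show (((p:ℤ) * m j : ℤ) : ZMod p) = 0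
              push_cast
              simp
          rw [Set.indicator_of_mem him, Set.indicator_of_mem (show m ∈ T from hm)]
          have h1 : (p:ℝ) ^ α * rK α γ m ≤ rK α γ (i m) := rK_smul hγ hα0 hm hp1'
          have hpos : (0:ℝ) < (p:ℝ) ^ α * rK α γ m :=
            mul_pos (Real.rpow_pos_of_pos hp0 _) (rK_pos hγ m)
          have h2 : F t (i m) ≤ ((p:ℝ) ^ α * rK α γ m) ^ (-t) :=
            Real.rpow_le_rpow_of_nonpos hpos h1 (by linarith)
          have h3 : ((p:ℝ) ^ α * rK α γ m) ^ (-t) = (p:ℝ) ^ (α * -t) * F t m := by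
            rw [Real.mul_rpow (Real.rpow_pos_of_pos hp0 _).le (rK_pos hγ m).le,
              ← Real.rpow_mul hp0.le]
          have h4 : (p:ℝ) ^ (α * -t) ≤ (p:ℝ)⁻¹ := by
            rw [← Real.rpow_neg_one]
            exact Real.rpow_le_rpow_of_exponent_le hp1 (by nlinarith)
          calc F t (i m) ≤ (p:ℝ) ^ (α * -t) * F t m := h2.trans_eq h3
            _ ≤ (p:ℝ)⁻¹ * F t m := mul_le_mul_of_nonneg_right h4 (hFpos t m).le
      have hsum2 : Summable fun m => (p:ℝ)⁻¹ * T.indicator (F t) m :=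
        (hst.indicator T).mul_left _
      have hsum1 : Summable fun m => D.indicator (F t) (i m) :=
        Summable.of_nonneg_of_le (fun m => hindnn D t _) hbound hsum2
      calc ∑' h, D.indicator (F t) h = ∑' m, D.indicator (F t) (i m) :=
            (hiinj.tsum_eq hsupp).symm
        _ ≤ ∑' m, (p:ℝ)⁻¹ * T.indicator (F t) m := Summable.tsum_le_tsum hbound hsum1 hsum2
        _ = (p:ℝ)⁻¹ * M t := by rw [tsum_mul_left]
    have step2 : ∀ h, (N h : ℝ) * F t h
        ≤ (p:ℝ) ^ (d-1) * T.indicator (F t) h + (p:ℝ) ^ d * D.indicator (F t) h := by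
      intro h
      rcases eq_or_ne h 0 with rfl | hh
      · have hN0 : N (0 : Fin d → ℤ) = 0 := by
          rw [hN]
          simp [hS]
        rw [hN0, Set.indicator_of_notMem (by simp [hT] : (0 : Fin d → ℤ) ∉ T),
          Set.indicator_of_notMem (by simp [hD] : (0 : Fin d → ℤ) ∉ D)]
        simp
      · have hTm : h ∈ T := hh
        rw [Set.indicator_of_mem hTm]
        by_cases hc : ∀ j, ((h j : ZMod p) = 0)
        · have hDm : h ∈ D := ⟨hh, hc⟩
          rw [Set.indicator_of_mem hDm]
          have hNle : (N h : ℝ) ≤ (p:ℝ) ^ d := by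
            have h5 : N h ≤ Fintype.card (Fin d → ZMod p) :=
              le_trans (Finset.card_filter_le _ _) (le_of_eq Finset.card_univ)
            calc (N h : ℝ) ≤ (Fintype.card (Fin d → ZMod p) : ℝ) := by exact_mod_cast h5
              _ = (p:ℝ) ^ d := by rw [hcardfun]; push_cast; ring
          have hmul := mul_le_mul_of_nonneg_right hNle (hFpos t h).le
          have : (0:ℝ) ≤ (p:ℝ) ^ (d-1) * F t h :=
            mul_nonneg (by positivity) (hFpos t h).le
          linarith
        · have hDm : h ∉ D := fun hmem => hc hmem.2
          rw [Set.indicator_of_notMem hDm, mul_zero, add_zero]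
          have hcne : (fun j => ((h j : ZMod p))) ≠ 0 := by
            intro h0; apply hc; intro j; exact congrFun h0 j
          have hcard := card_ker_le p hcne
          have hNeq : N h ≤ (Finset.univ.filter
              fun z : Fin d → ZMod p => ∑ j, ((h j : ZMod p)) * z j = 0).card := by
            rw [hN]
            apply Finset.card_le_card
            intro z hz
            rw [Finset.mem_filter] at hz ⊢
            have hz2 : h ∈ S z := hz.2
            rw [hS] at hz2
            exact ⟨hz.1, hz2.2⟩
          have hNle : (N h : ℝ) ≤ (p:ℝ) ^ (d-1) := by
            calc (N h : ℝ) ≤ ((p ^ (d-1) : ℕ) : ℝ) := by exact_mod_cast hNeq.trans hcard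
              _ = (p:ℝ) ^ (d-1) := by push_cast; ring
          exact mul_le_mul_of_nonneg_right hNle (hFpos t h).le
    have hsum_indT : Summable (T.indicator (F t)) := hst.indicator T
    have hsum_indD : Summable (D.indicator (F t)) := hst.indicator D
    have hRHSsum : Summable (fun h =>
        (p:ℝ) ^ (d-1) * T.indicator (F t) h + (p:ℝ) ^ d * D.indicator (F t) h) :=
      (hsum_indT.mul_left _).add (hsum_indD.mul_left _)
    have hLHSsum : Summable fun h => (N h : ℝ) * F t h :=
      Summable.of_nonneg_of_le
        (fun h => mul_nonneg (Nat.cast_nonneg _) (hFpos t h).le) step2 hRHSsum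
    have step3 : ∑' h, (N h : ℝ) * F t h
        ≤ (p:ℝ) ^ (d-1) * M t + (p:ℝ) ^ d * ((p:ℝ)⁻¹ * M t) := by
      calc ∑' h, (N h : ℝ) * F t h
          ≤ ∑' h, ((p:ℝ) ^ (d-1) * T.indicator (F t) h + (p:ℝ) ^ d * D.indicator (F t) h) :=
            Summable.tsum_le_tsum step2 hLHSsum hRHSsum
        _ = (p:ℝ) ^ (d-1) * M t + (p:ℝ) ^ d * ∑' h, D.indicator (F t) h := by
            rw [Summable.tsum_add (hsum_indT.mul_left _) (hsum_indD.mul_left _),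
              tsum_mul_left, tsum_mul_left]
        _ ≤ _ := by
            have := mul_le_mul_of_nonneg_left hdiv (by positivity : (0:ℝ) ≤ (p:ℝ) ^ d)
            linarith
    have hpd : (p:ℝ) ^ d = (p:ℝ) ^ (d-1) * p := by
      rw [← pow_succ, Nat.sub_add_cancel hd]
    have htotal : ∑ z : Fin d → ZMod p, e t z ≤ ∑ _z : Fin d → ZMod p, 2 / p * M t := by
      rw [step1, Finset.sum_const, Finset.card_univ, hcardfun, nsmul_eq_mul]
      refine step3.trans ?_
      have h6 : (p:ℝ) ^ d * ((p:ℝ)⁻¹ * M t) = (p:ℝ) ^ (d-1) * M t := by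
        rw [hpd]; field_simp; try ring
      have h7 : ((p ^ d : ℕ) : ℝ) * (2 / p * M t) = 2 * ((p:ℝ) ^ (d-1) * M t) := by
        push_cast
        rw [hpd]; field_simp; try ring
      rw [h6, h7]
      linarith
    obtain ⟨z, _, hz⟩ := Finset.exists_le_of_sum_le Finset.univ_nonempty htotal
    exact ⟨z, hz⟩
  -- choose the minimizer of the λ = 1/2 error
  obtain ⟨zstar, _, hmin⟩ := Finset.exists_min_image Finset.univ (e 2) Finset.univ_nonempty
  refine ⟨zstar, ?_⟩
  intro lam hl1 hl2
  have hlam0 : 0 < lam := by linarith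
  set β : ℝ := 1 / lam with hβ
  have hβ0 : 0 < β := by positivity
  have hαβ : 1 < α * β := by
    rw [hβ]
    rw [show α * (1 / lam) = α / lam by ring]
    exact (one_lt_div hlam0).2 hl2
  have hsβ : Summable (F β) := hFs β hαβ
  obtain ⟨zl, hzl⟩ := key β hαβ
  have hq1 : 1 ≤ 2 * lam := by linarith
  -- rewrite the goal
  have hLHS : (∑' h : {h : Fin d → ℤ // h ≠ 0 ∧ ∑ j, ((h j : ZMod p) * zstar j) = 0},
      rK α γ h.1 ^ (-2 : ℝ)) = e 2 zstar := by
    rw [he]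
    exact tsum_subtype (S zstar) (F 2)
  have hmuK : muK α γ lam = M β := by
    rw [hM]
    exact tsum_subtype T (F β)
  rw [hLHS, hmuK]
  -- pointwise power identity
  have hpt : ∀ h, ((S zl).indicator (F β) h) ^ (2 * lam) = (S zl).indicator (F 2) h := by
    intro h
    by_cases hh : h ∈ S zl
    · rw [Set.indicator_of_mem hh, Set.indicator_of_mem hh]
      show (rK α γ h ^ (-β)) ^ (2 * lam) = rK α γ h ^ (-(2:ℝ))
      rw [← Real.rpow_mul (rK_pos hγ h).le]
      congr 1
      rw [hβ]
      field_simp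
    · rw [Set.indicator_of_notMem hh, Set.indicator_of_notMem hh]
      exact Real.zero_rpow (by linarith)
  have hsq : Summable fun h => ((S zl).indicator (F β) h) ^ (2 * lam) :=
    (hs2.indicator (S zl)).congr fun h => (hpt h).symm
  have hjensen : e 2 zl ≤ (e β zl) ^ (2 * lam) := by
    rw [he]
    calc (∑' h, (S zl).indicator (F 2) h)
        = ∑' h, ((S zl).indicator (F β) h) ^ (2 * lam) := tsum_congr fun h => (hpt h).symm
      _ ≤ (∑' h, (S zl).indicator (F β) h) ^ (2 * lam) :=
          tsum_rpow_le' (hindnn (S zl) β) (hsβ.indicator (S zl)) hq1 hsq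
  have heβnn : 0 ≤ e β zl := tsum_nonneg (hindnn (S zl) β)
  calc e 2 zstar ≤ e 2 zl := hmin zl (Finset.mem_univ _)
    _ ≤ (e β zl) ^ (2 * lam) := hjensen
    _ ≤ (2 / p * M β) ^ (2 * lam) := Real.rpow_le_rpow heβnn hzl (by linarith)
end

section
/- Let α > 1/2, λ ∈ (1/2, α), δ ∈ (0, λ − 1/2], B > 0, and r : Z^d \ {0} → ℝ>0 with μ := ∑_{h≠0} r(h)^{-1/λ} < ∞. Suppose ω : Z^d \ {0} → ℝ≥0 satisfies ω(h) ≤ C r(h)^{δ/λ}/n for all h, and ω(h) = 0 whenever r(h) ≤ B. Then (∑_{h≠0} ω(h)^2 r(h)^{-2})^{1/2} ≤ (C/n) B^{(1+2δ)/(2λ) − 1} μ^{1/2}. -/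
open scoped BigOperators

theorem stmt14 (d : ℕ) (hd : 1 ≤ d) (α lam δ B C n : ℝ)
    (hα : 1 / 2 < α) (hlam1 : 1 / 2 < lam) (hlam2 : lam < α)
    (hδ0 : 0 < δ) (hδ : δ ≤ lam - 1 / 2) (hB : 0 < B) (hC : 0 ≤ C) (hn : 0 < n)
    (r : {h : Fin d → ℤ // h ≠ 0} → ℝ) (hr : ∀ h, 0 < r h)
    (hμ : Summable (fun h => r h ^ (-(1 / lam))))
    (ω : {h : Fin d → ℤ // h ≠ 0} → ℝ) (hω0 : ∀ h, 0 ≤ ω h)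
    (hωC : ∀ h, ω h ≤ C * r h ^ (δ / lam) / n)
    (hωB : ∀ h, r h ≤ B → ω h = 0) :
    (∑' h, ω h ^ 2 * r h ^ (-2 : ℝ)) ^ ((1 : ℝ) / 2) ≤
      (C / n) * B ^ ((1 + 2 * δ) / (2 * lam) - 1) *
        (∑' h, r h ^ (-(1 / lam))) ^ ((1 : ℝ) / 2) := by
  have hlam0 : 0 < lam := lt_trans (by norm_num) hlam1
  set e : ℝ := (1 + 2 * δ) / (2 * lam) - 1 with he
  set A : ℝ := (C / n) * B ^ e with hA
  have hA0 : 0 ≤ A := mul_nonneg (div_nonneg hC hn.le) (Real.rpow_nonneg hB.le _)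
  have h2e : 2 * e = 2 * δ / lam - 2 + 1 / lam := by
    rw [he]
    field_simp
    ring
  have h2e0 : 2 * e ≤ 0 := by
    have : 1 + 2 * δ ≤ 2 * lam := by linarith
    have := div_le_one_of_le₀ this (by linarith)
    simp only [he]
    linarith
  have key : ∀ h, ω h ^ 2 * r h ^ (-2 : ℝ) ≤ A ^ 2 * r h ^ (-(1 / lam)) := by
    intro h
    by_cases hc : r h ≤ B
    · rw [hωB h hc]
      have : 0 ≤ A ^ 2 * r h ^ (-(1 / lam)) :=
        mul_nonneg (sq_nonneg _) (Real.rpow_nonneg (hr h).le _)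
      simpa using this
    · push_neg at hc
      have hrh := hr h
      have h1 : ω h ^ 2 ≤ (C * r h ^ (δ / lam) / n) ^ 2 :=
        pow_le_pow_left₀ (hω0 h) (hωC h) 2
      have h2 : ω h ^ 2 * r h ^ (-2 : ℝ) ≤
          (C / n) ^ 2 * (r h ^ (2 * δ / lam - 2)) := by
        have hrp : (r h ^ (δ / lam)) ^ 2 = r h ^ (2 * δ / lam) := by
          rw [← Real.rpow_natCast (r h ^ (δ / lam)) 2, ← Real.rpow_mul hrh.le]
          norm_num
          ring_nf
        have hadd : r h ^ (2 * δ / lam) * r h ^ (-2 : ℝ) = r h ^ (2 * δ / lam - 2) := by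
          rw [← Real.rpow_add hrh]; ring_nf
        have : (C * r h ^ (δ / lam) / n) ^ 2 * r h ^ (-2 : ℝ) =
            (C / n) ^ 2 * (r h ^ (2 * δ / lam - 2)) := by
          rw [div_pow, mul_pow, hrp,
            show C ^ 2 * r h ^ (2 * δ / lam) / n ^ 2 * r h ^ (-2 : ℝ) =
              (C / n) ^ 2 * (r h ^ (2 * δ / lam) * r h ^ (-2 : ℝ)) from by ring, hadd]
        calc ω h ^ 2 * r h ^ (-2 : ℝ) ≤ (C * r h ^ (δ / lam) / n) ^ 2 * r h ^ (-2 : ℝ) := by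
              exact mul_le_mul_of_nonneg_right h1 (Real.rpow_nonneg hrh.le _)
          _ = (C / n) ^ 2 * (r h ^ (2 * δ / lam - 2)) := this
      have h3 : r h ^ (2 * δ / lam - 2) = r h ^ (2 * e) * r h ^ (-(1 / lam)) := by
        rw [← Real.rpow_add hrh, h2e]
        ring_nf
      have h4 : r h ^ (2 * e) ≤ B ^ (2 * e) :=
        Real.rpow_le_rpow_of_nonpos hB hc.le h2e0
      have h5 : A ^ 2 = (C / n) ^ 2 * B ^ (2 * e) := by
        rw [hA, mul_pow, ← Real.rpow_natCast (B ^ e) 2, ← Real.rpow_mul hB.le]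
        norm_num [mul_comm]
      rw [h5]
      calc ω h ^ 2 * r h ^ (-2 : ℝ) ≤ (C / n) ^ 2 * (r h ^ (2 * δ / lam - 2)) := h2
        _ = (C / n) ^ 2 * r h ^ (2 * e) * r h ^ (-(1 / lam)) := by rw [h3]; ring
        _ ≤ (C / n) ^ 2 * B ^ (2 * e) * r h ^ (-(1 / lam)) := by
            apply mul_le_mul_of_nonneg_right _ (Real.rpow_nonneg hrh.le _)
            exact mul_le_mul_of_nonneg_left h4 (sq_nonneg _)
  have hsumR : Summable (fun h => A ^ 2 * r h ^ (-(1 / lam))) := hμ.mul_left _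
  have hsumL : Summable (fun h => ω h ^ 2 * r h ^ (-2 : ℝ)) :=
    Summable.of_nonneg_of_le
      (fun h => mul_nonneg (sq_nonneg _) (Real.rpow_nonneg (hr h).le _)) key hsumR
  have htsum : (∑' h, ω h ^ 2 * r h ^ (-2 : ℝ)) ≤ A ^ 2 * ∑' h, r h ^ (-(1 / lam)) := by
    rw [← tsum_mul_left]
    exact Summable.tsum_le_tsum key hsumL hsumR
  have hμ0 : 0 ≤ ∑' h, r h ^ (-(1 / lam)) :=
    tsum_nonneg fun h => Real.rpow_nonneg (hr h).le _
  have hL0 : 0 ≤ ∑' h, ω h ^ 2 * r h ^ (-2 : ℝ) :=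
    tsum_nonneg fun h => mul_nonneg (sq_nonneg _) (Real.rpow_nonneg (hr h).le _)
  calc (∑' h, ω h ^ 2 * r h ^ (-2 : ℝ)) ^ ((1 : ℝ) / 2)
      ≤ (A ^ 2 * ∑' h, r h ^ (-(1 / lam))) ^ ((1 : ℝ) / 2) :=
        Real.rpow_le_rpow hL0 htsum (by norm_num)
    _ = A * (∑' h, r h ^ (-(1 / lam))) ^ ((1 : ℝ) / 2) := by
        rw [Real.mul_rpow (sq_nonneg _) hμ0, ← Real.rpow_natCast A 2,
          ← Real.rpow_mul hA0]
        norm_num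
end

section
/- Let α > 1/2 and r(h) = |h|^{2α} for h ∈ Z \ {0} (i.e., one dimension with γ = 1). Let P_n be the set of primes in (n/2, n], n ≥ 2, with |P_n| > c'n/ln n. Then (1/|P_n|^2) ∑_{p,q ∈ P_n} ∑_{h ≠ 0, p | h, q | h} |h|^{−2α} ≤ (2^{2α} ln n)/(c' n^{2α+1}) · 2ζ(2α) + 2^{4α}/n^{4α} · 2ζ(2α). -/
open scoped BigOperators Classical

/-- The set of primes `p` with `n/2 < p ≤ n`. -/
def Pn (n : ℕ) : Finset ℕ :=
  (Finset.range (n + 1)).filter (fun p => p.Prime ∧ n < 2 * p)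

theorem stmt15 (α : ℝ) (hα : 1 / 2 < α) (n : ℕ) (hn : 2 ≤ n)
    (c' : ℝ) (hc'0 : 0 < c')
    (hc' : c' * n / Real.log n < ((Pn n).card : ℝ)) :
    (1 / ((Pn n).card : ℝ) ^ 2) * ∑ p ∈ Pn n, ∑ q ∈ Pn n,
        ∑' h : {h : ℤ // h ≠ 0 ∧ (p : ℤ) ∣ h ∧ (q : ℤ) ∣ h},
          (|(h : ℤ)| : ℝ) ^ (-(2 * α)) ≤
      (2 : ℝ) ^ (2 * α) * Real.log n / (c' * (n : ℝ) ^ (2 * α + 1)) *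
          (∑' h : {h : ℤ // h ≠ 0}, (|(h : ℤ)| : ℝ) ^ (-(2 * α))) +
        (2 : ℝ) ^ (4 * α) / (n : ℝ) ^ (4 * α) *
          (∑' h : {h : ℤ // h ≠ 0}, (|(h : ℤ)| : ℝ) ^ (-(2 * α))) := by
  have h2α : (1 : ℝ) < 2 * α := by linarith
  have hα0 : (0 : ℝ) < 2 * α := by linarith
  set f : ℤ → ℝ := fun h => (|h| : ℝ) ^ (-(2 * α)) with hf
  have hsum : Summable f := by
    have := Real.summable_abs_int_rpow h2α
    simpa [hf, Int.cast_abs] using this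
  set S : ℝ := ∑' h : {h : ℤ // h ≠ 0}, f h with hSdef
  have hS0 : 0 ≤ S := by
    apply tsum_nonneg
    intro h
    exact Real.rpow_nonneg (by positivity) _
  -- key reindexing lemma
  have key : ∀ (m : ℤ), 0 < m → ∀ P : ℤ → Prop,
      (∀ h : ℤ, (h ≠ 0 ∧ P h) ↔ (h ≠ 0 ∧ m ∣ h)) →
      ∑' h : {h : ℤ // h ≠ 0 ∧ P h}, f h = (m : ℝ) ^ (-(2 * α)) * S := by
    intro m hm P hP
    have hmne : m ≠ 0 := hm.ne'
    let e : {h : ℤ // h ≠ 0} ≃ {h : ℤ // h ≠ 0 ∧ P h} :=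
      { toFun := fun x => ⟨m * x.1, (hP _).mpr ⟨mul_ne_zero hmne x.2, dvd_mul_right m x.1⟩⟩
        invFun := fun y => ⟨y.1 / m, by
          obtain ⟨hy0, hyd⟩ := (hP y.1).mp y.2
          intro h0
          apply hy0
          have := Int.ediv_mul_cancel hyd
          rw [h0, zero_mul] at this
          exact this.symm⟩
        left_inv := fun x => Subtype.ext (Int.mul_ediv_cancel_left x.1 hmne)
        right_inv := fun y => Subtype.ext (Int.mul_ediv_cancel' ((hP y.1).mp y.2).2) }
    rw [← e.tsum_eq]
    have hpt : ∀ x : {h : ℤ // h ≠ 0}, f ((e x : ℤ)) = (m : ℝ) ^ (-(2 * α)) * f x.1 := by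
      intro x
      show (|(m * x.1 : ℤ)| : ℝ) ^ (-(2 * α)) = _
      push_cast
      rw [abs_mul, abs_of_pos (by exact_mod_cast hm : (0:ℝ) < (m:ℝ)),
        Real.mul_rpow (by positivity) (by positivity)]
    calc ∑' x : {h : ℤ // h ≠ 0}, f ((e x : ℤ))
        = ∑' x : {h : ℤ // h ≠ 0}, (m : ℝ) ^ (-(2 * α)) * f x.1 := tsum_congr hpt
      _ = (m : ℝ) ^ (-(2 * α)) * S := tsum_mul_left
  -- facts about n
  have hn1 : (1 : ℝ) < (n : ℝ) := by exact_mod_cast hn.trans_lt' (by norm_num)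
  have hn0 : (0 : ℝ) < (n : ℝ) := by linarith
  have hlogn : 0 < Real.log n := Real.log_pos hn1
  -- constants
  set A : ℝ := (2 : ℝ) ^ (2 * α) / (n : ℝ) ^ (2 * α) * S with hA
  set B : ℝ := (2 : ℝ) ^ (4 * α) / (n : ℝ) ^ (4 * α) * S with hB
  have hA0 : 0 ≤ A := by
    apply mul_nonneg _ hS0
    positivity
  have hB0 : 0 ≤ B := by
    apply mul_nonneg _ hS0
    positivity
  -- diagonal bound
  have hdiag : ∀ x : ℝ, (n : ℝ) / 2 < x → x ^ (-(2 * α)) ≤ (2:ℝ) ^ (2*α) / (n:ℝ) ^ (2*α) := by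
    intro x hx
    have hn2 : (0:ℝ) < (n:ℝ)/2 := by linarith
    have h1 : x ^ (-(2*α)) ≤ ((n:ℝ)/2) ^ (-(2*α)) :=
      Real.rpow_le_rpow_of_nonpos hn2 hx.le (by linarith)
    have h2 : ((n:ℝ)/2) ^ (-(2*α)) = (2:ℝ) ^ (2*α) / (n:ℝ) ^ (2*α) := by
      rw [Real.rpow_neg hn2.le, Real.div_rpow hn0.le (by norm_num)]
      rw [inv_div]
    linarith
  -- membership facts
  have hmem : ∀ p ∈ Pn n, p.Prime ∧ (n : ℝ) / 2 < (p : ℝ) := by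
    intro p hp
    rw [Pn, Finset.mem_filter, Finset.mem_range] at hp
    obtain ⟨_, hpp, hp2⟩ := hp
    refine ⟨hpp, ?_⟩
    have : (n : ℝ) < 2 * (p : ℝ) := by exact_mod_cast hp2
    linarith
  -- per-term bound
  have term_bound : ∀ p ∈ Pn n, ∀ q ∈ Pn n,
      (∑' h : {h : ℤ // h ≠ 0 ∧ (p : ℤ) ∣ h ∧ (q : ℤ) ∣ h}, f h) ≤
        (if p = q then A else 0) + B := by
    intro p hp q hq
    obtain ⟨hpp, hpb⟩ := hmem p hp
    obtain ⟨hqp, hqb⟩ := hmem q hq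
    have hppos : (0:ℤ) < (p:ℤ) := by exact_mod_cast hpp.pos
    have hqpos : (0:ℤ) < (q:ℤ) := by exact_mod_cast hqp.pos
    by_cases hpq : p = q
    · subst hpq
      simp only [if_pos rfl]
      have hval := key (p : ℤ) hppos (fun h => (p:ℤ) ∣ h ∧ (p:ℤ) ∣ h)
        (fun h => ⟨fun ⟨a, b⟩ => ⟨a, b.1⟩, fun ⟨a, b⟩ => ⟨a, b, b⟩⟩)
      rw [hval]
      have : ((p:ℤ) : ℝ) ^ (-(2*α)) ≤ (2:ℝ) ^ (2*α) / (n:ℝ) ^ (2*α) := by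
        apply hdiag
        push_cast
        exact hpb
      calc ((p:ℤ) : ℝ) ^ (-(2*α)) * S ≤ (2:ℝ) ^ (2*α) / (n:ℝ) ^ (2*α) * S :=
            mul_le_mul_of_nonneg_right this hS0
        _ = A := hA.symm
        _ ≤ A + B := le_add_of_nonneg_right hB0
    · simp only [if_neg hpq, zero_add]
      have hcop : IsCoprime (p : ℤ) (q : ℤ) :=
        Nat.isCoprime_iff_coprime.mpr ((Nat.coprime_primes hpp hqp).mpr hpq)
      have hval := key ((p : ℤ) * q) (mul_pos hppos hqpos)
        (fun h => (p:ℤ) ∣ h ∧ (q:ℤ) ∣ h)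
        (fun h => ⟨fun ⟨a, b⟩ => ⟨a, hcop.mul_dvd b.1 b.2⟩,
          fun ⟨a, b⟩ => ⟨a, (dvd_mul_right _ _).trans b, (dvd_mul_left _ _).trans b⟩⟩)
      rw [hval]
      have hpqb : ((n:ℝ)/2) * ((n:ℝ)/2) < ((p:ℤ)*(q:ℤ) : ℤ) := by
        push_cast
        have hn2 : (0:ℝ) < (n:ℝ)/2 := by linarith
        calc (n:ℝ)/2 * ((n:ℝ)/2) < (p:ℝ) * ((n:ℝ)/2) := by
              apply mul_lt_mul_of_pos_right hpb hn2
          _ < (p:ℝ) * (q:ℝ) := by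
              apply mul_lt_mul_of_pos_left hqb
              exact_mod_cast hpp.pos
      have hbd : (((p:ℤ)*(q:ℤ) : ℤ) : ℝ) ^ (-(2*α)) ≤ (2:ℝ) ^ (4*α) / (n:ℝ) ^ (4*α) := by
        have hbase : (0:ℝ) < (n:ℝ)^2/4 := by positivity
        have h1 : (((p:ℤ)*(q:ℤ) : ℤ) : ℝ) ^ (-(2*α)) ≤ ((n:ℝ)^2/4) ^ (-(2*α)) := by
          apply Real.rpow_le_rpow_of_nonpos hbase _ (by linarith)
          have := hpqb
          nlinarith [hpqb]
        have h2 : ((n:ℝ)^2/4) ^ (-(2*α)) = (2:ℝ) ^ (4*α) / (n:ℝ) ^ (4*α) := by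
          rw [Real.rpow_neg hbase.le, Real.div_rpow (by positivity) (by norm_num : (0:ℝ) ≤ 4),
            inv_div]
          congr 1
          · have : (4:ℝ) = (2:ℝ) ^ (2:ℝ) := by
              rw [show (2:ℝ) = ((2:ℕ):ℝ) by norm_num, Real.rpow_natCast]; norm_num
            rw [this, ← Real.rpow_mul (by norm_num)]
            ring_nf
          · rw [show (n:ℝ)^2 = (n:ℝ) ^ (2:ℝ) by rw [Real.rpow_two],
              ← Real.rpow_mul hn0.le]
            ring_nf
        linarith
      calc (((p:ℤ)*(q:ℤ) : ℤ) : ℝ) ^ (-(2*α)) * S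
          ≤ (2:ℝ) ^ (4*α) / (n:ℝ) ^ (4*α) * S := mul_le_mul_of_nonneg_right hbd hS0
        _ = B := hB.symm
  -- sum bound
  set K : ℝ := ((Pn n).card : ℝ) with hK
  have hKpos : 0 < K := by
    have : 0 < c' * n / Real.log n := by positivity
    linarith
  have sum_bound : ∑ p ∈ Pn n, ∑ q ∈ Pn n,
      (∑' h : {h : ℤ // h ≠ 0 ∧ (p : ℤ) ∣ h ∧ (q : ℤ) ∣ h}, f h) ≤ K * A + K^2 * B := by
    calc ∑ p ∈ Pn n, ∑ q ∈ Pn n,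
        (∑' h : {h : ℤ // h ≠ 0 ∧ (p : ℤ) ∣ h ∧ (q : ℤ) ∣ h}, f h)
        ≤ ∑ p ∈ Pn n, ∑ q ∈ Pn n, ((if p = q then A else 0) + B) := by
          apply Finset.sum_le_sum
          intro p hp
          apply Finset.sum_le_sum
          intro q hq
          exact term_bound p hp q hq
      _ = ∑ p ∈ Pn n, (A + (Pn n).card * B) := by
          apply Finset.sum_congr rfl
          intro p hp
          rw [Finset.sum_add_distrib, Finset.sum_ite_eq (Pn n) p (fun _ => A), if_pos hp]
          simp [mul_comm]
      _ = K * A + K^2 * B := by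
          rw [Finset.sum_const, nsmul_eq_mul]
          rw [hK]
          ring
  -- assemble
  have step1 : (1 / K ^ 2) * ∑ p ∈ Pn n, ∑ q ∈ Pn n,
      (∑' h : {h : ℤ // h ≠ 0 ∧ (p : ℤ) ∣ h ∧ (q : ℤ) ∣ h}, f h) ≤ A / K + B := by
    rw [div_mul_eq_mul_div, one_mul, div_le_iff₀ (by positivity)]
    calc ∑ p ∈ Pn n, ∑ q ∈ Pn n,
        (∑' h : {h : ℤ // h ≠ 0 ∧ (p : ℤ) ∣ h ∧ (q : ℤ) ∣ h}, f h) ≤ K * A + K^2 * B :=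
        sum_bound
      _ = (A / K + B) * K ^ 2 := by field_simp
  have hKinv : 1 / K ≤ Real.log n / (c' * n) := by
    rw [div_le_div_iff₀ hKpos (by positivity)]
    calc 1 * (c' * n) = c' * n := one_mul _
      _ = (c' * n / Real.log n) * Real.log n := by field_simp
      _ ≤ K * Real.log n := mul_le_mul_of_nonneg_right hc'.le hlogn.le
      _ = Real.log n * K := mul_comm _ _
  have step2 : A / K ≤ (2 : ℝ) ^ (2 * α) * Real.log n / (c' * (n : ℝ) ^ (2 * α + 1)) * S := by
    have h1 : A / K = A * (1 / K) := by ring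
    rw [h1]
    calc A * (1 / K) ≤ A * (Real.log n / (c' * n)) :=
          mul_le_mul_of_nonneg_left hKinv hA0
      _ = (2 : ℝ) ^ (2 * α) * Real.log n / (c' * (n : ℝ) ^ (2 * α + 1)) * S := by
          rw [hA, Real.rpow_add_one hn0.ne']
          have hr : (0:ℝ) < (n:ℝ) ^ (2*α) := Real.rpow_pos_of_pos hn0 _
          field_simp
  calc (1 / K ^ 2) * ∑ p ∈ Pn n, ∑ q ∈ Pn n,
      (∑' h : {h : ℤ // h ≠ 0 ∧ (p : ℤ) ∣ h ∧ (q : ℤ) ∣ h}, f h)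
      ≤ A / K + B := step1
    _ ≤ (2 : ℝ) ^ (2 * α) * Real.log n / (c' * (n : ℝ) ^ (2 * α + 1)) * S + B :=
        add_le_add_left step2 _
    _ = _ := by rw [hB]
end

section
/- Let α > 1/2 and r(h) = |h|^{2α}. For z ≡ 1, the one-dimensional randomised error squared satisfies (1/|P_n|²) ∑_{p,q∈P_n} ∑_{h≠0, h ≡ 0 mod p, h ≡ 0 mod q} |h|^{−2α} ≤ inf_{λ∈[1/2,α)} (C'_λ ln n / n^{2λ+1}) (∑_{h≠0} |h|^{−α/λ})^{2λ} with C'_λ = 2^{2λ}/c' + 2^{4λ+1}. -/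
open scoped BigOperators Classical

private lemma sumdvd (L : ℤ) (hL : 0 < L) (s : ℝ) :
    ∑' h : {h : ℤ // h ≠ 0 ∧ L ∣ h}, (|(h : ℤ)| : ℝ) ^ (-s)
      = ((L : ℝ)) ^ (-s) * ∑' h : {h : ℤ // h ≠ 0}, (|(h : ℤ)| : ℝ) ^ (-s) := by
  have hL0 : L ≠ 0 := hL.ne'
  let e : {h : ℤ // h ≠ 0} ≃ {h : ℤ // h ≠ 0 ∧ L ∣ h} :=
  { toFun := fun m => ⟨L * m.1, mul_ne_zero hL0 m.2, dvd_mul_right _ _⟩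
    invFun := fun h => ⟨h.1 / L, fun hm => h.2.1 (by
      have h1 := Int.ediv_mul_cancel h.2.2
      rw [hm, zero_mul] at h1; exact h1.symm)⟩
    left_inv := fun m => Subtype.ext (Int.mul_ediv_cancel_left _ hL0)
    right_inv := fun h => Subtype.ext (Int.mul_ediv_cancel' h.2.2) }
  rw [← Equiv.tsum_eq e, ← tsum_mul_left]
  refine tsum_congr fun m => ?_
  show |((L * m.1 : ℤ) : ℝ)| ^ (-s) = (L:ℝ) ^ (-s) * |((m.1 : ℤ) : ℝ)| ^ (-s)
  have hLR : (0:ℝ) < (L:ℝ) := by exact_mod_cast hL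
  push_cast
  rw [abs_mul, abs_of_pos hLR, Real.mul_rpow hLR.le (abs_nonneg _)]

set_option maxHeartbeats 1600000 in
theorem stmt17 (α : ℝ) (hα : 1 / 2 < α) (n : ℕ) (hn : 2 ≤ n)
    (c' : ℝ) (hc'0 : 0 < c')
    (hc' : c' * n / Real.log n < ((Pn n).card : ℝ)) :
    ∀ lam : ℝ, 1 / 2 ≤ lam → lam < α →
      (1 / ((Pn n).card : ℝ) ^ 2) * ∑ p ∈ Pn n, ∑ q ∈ Pn n,
          ∑' h : {h : ℤ // h ≠ 0 ∧ (p : ℤ) ∣ h ∧ (q : ℤ) ∣ h},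
            (|(h : ℤ)| : ℝ) ^ (-(2 * α)) ≤
        ((2 : ℝ) ^ (2 * lam) / c' + 2 ^ (4 * lam + 1)) * Real.log n /
            (n : ℝ) ^ (2 * lam + 1) *
          (∑' h : {h : ℤ // h ≠ 0}, (|(h : ℤ)| : ℝ) ^ (-(α / lam))) ^ (2 * lam) := by
  intro lam hl1 hl2
  classical
  have hn2 : (2:ℝ) ≤ (n:ℝ) := by exact_mod_cast hn
  have hn0 : (0:ℝ) < n := by linarith
  have hn1 : (1:ℝ) ≤ n := by linarith
  have hlam0 : (0:ℝ) < lam := by linarith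
  have hα0 : (0:ℝ) < α := by linarith
  have hlog : 0 < Real.log n := Real.log_pos (by linarith)
  have hlog2 : (1:ℝ) ≤ 2 * Real.log n := by
    have h2 := Real.log_two_gt_d9
    have h3 : Real.log 2 ≤ Real.log n := Real.log_le_log (by norm_num) hn2
    linarith
  have hcard : (0:ℝ) < ((Pn n).card : ℝ) := lt_trans (by positivity) hc'
  set m : ℝ := (n:ℝ) / 2 with hm
  have hm1 : (1:ℝ) ≤ m := by rw [hm]; linarith
  have hm0 : (0:ℝ) < m := by linarith
  -- summability
  have hsum : ∀ s : ℝ, 1 < s →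
      Summable (fun h : {h : ℤ // h ≠ 0} => (|(h:ℤ)|:ℝ) ^ (-s)) := by
    intro s hs
    have h1 : Summable (fun h : ℤ => (|(h:ℤ)|:ℝ) ^ (-s)) := by
      simpa [Int.cast_abs] using Real.summable_abs_int_rpow hs
    exact h1.comp_injective Subtype.coe_injective
  have h2α1 : (1:ℝ) < 2 * α := by linarith
  have hal1 : (1:ℝ) < α / lam := (one_lt_div hlam0).mpr hl2
  have hsum2α := hsum _ h2α1
  have hsumal := hsum _ hal1
  set S := ∑' h : {h : ℤ // h ≠ 0}, (|(h:ℤ)|:ℝ) ^ (-(2*α)) with hSdef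
  set T := ∑' h : {h : ℤ // h ≠ 0}, (|(h:ℤ)|:ℝ) ^ (-(α/lam)) with hTdef
  have hS0 : 0 ≤ S := tsum_nonneg fun h => by positivity
  have hterm_le_T : ∀ h : {h : ℤ // h ≠ 0}, (|(h:ℤ)|:ℝ) ^ (-(α/lam)) ≤ T :=
    fun h => Summable.le_tsum hsumal h fun _ _ => by positivity
  have hT1 : (1:ℝ) ≤ T := by
    have := hterm_le_T ⟨1, one_ne_zero⟩
    simpa using this
  have hT0 : (0:ℝ) < T := lt_of_lt_of_le one_pos hT1
  -- S ≤ T ^ (2 * lam)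
  have hST : S ≤ T ^ (2 * lam) := by
    have hpt : ∀ h : {h : ℤ // h ≠ 0},
        (|(h:ℤ)|:ℝ) ^ (-(2*α)) ≤ (|(h:ℤ)|:ℝ) ^ (-(α/lam)) * T ^ (2*lam - 1) := by
      intro h
      have habs0 : (0:ℝ) < (|(h:ℤ)|:ℝ) := by
        have : (0:ℤ) < |(h:ℤ)| := abs_pos.mpr h.2
        exact_mod_cast this
      have ha0 : (0:ℝ) < (|(h:ℤ)|:ℝ) ^ (-(α/lam)) := Real.rpow_pos_of_pos habs0 _
      have h1 : (|(h:ℤ)|:ℝ) ^ (-(2*α)) = ((|(h:ℤ)|:ℝ) ^ (-(α/lam))) ^ (2*lam) := by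
        rw [← Real.rpow_mul habs0.le]
        congr 1
        field_simp
      rw [h1]
      have h2 : ((|(h:ℤ)|:ℝ) ^ (-(α/lam))) ^ (2*lam)
          = (|(h:ℤ)|:ℝ) ^ (-(α/lam)) * ((|(h:ℤ)|:ℝ) ^ (-(α/lam))) ^ (2*lam - 1) := by
        rw [← Real.rpow_one_add' ha0.le (by intro hc; nlinarith : (1:ℝ) + (2*lam-1) ≠ 0)]
        ring_nf
      rw [h2]
      have h3 : ((|(h:ℤ)|:ℝ) ^ (-(α/lam))) ^ (2*lam - 1) ≤ T ^ (2*lam - 1) :=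
        Real.rpow_le_rpow ha0.le (hterm_le_T h) (by linarith)
      exact mul_le_mul_of_nonneg_left h3 ha0.le
    have h4 := Summable.tsum_le_tsum hpt hsum2α (hsumal.mul_right _)
    rw [tsum_mul_right] at h4
    calc S ≤ T * T ^ (2*lam - 1) := h4
      _ = T ^ (2 * lam) := by
          rw [← Real.rpow_one_add' hT0.le (by intro hc; nlinarith : (1:ℝ) + (2*lam-1) ≠ 0)]
          ring_nf
  -- membership facts
  have hmem : ∀ p ∈ Pn n, Nat.Prime p ∧ m < (p:ℝ) := by
    intro p hp
    simp only [Pn, Finset.mem_filter, Finset.mem_range] at hp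
    refine ⟨hp.2.1, ?_⟩
    have : (n:ℝ) < 2 * (p:ℝ) := by exact_mod_cast hp.2.2
    rw [hm]; linarith
  -- per pair bound
  have hpair : ∀ p ∈ Pn n, ∀ q ∈ Pn n,
      (∑' h : {h : ℤ // h ≠ 0 ∧ (p:ℤ) ∣ h ∧ (q:ℤ) ∣ h}, (|(h:ℤ)|:ℝ) ^ (-(2*α)))
        ≤ (if p = q then m ^ (-(2*α)) * S else (m*m) ^ (-(2*α)) * S) := by
    intro p hp q hq
    obtain ⟨hpp, hpl⟩ := hmem p hp
    obtain ⟨hqp, hql⟩ := hmem q hq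
    have hp0 : (0:ℤ) < (p:ℤ) := by exact_mod_cast hpp.pos
    have hq0 : (0:ℤ) < (q:ℤ) := by exact_mod_cast hqp.pos
    by_cases hpq : p = q
    · subst hpq
      rw [if_pos rfl]
      have e1 : ∀ h : ℤ, (h ≠ 0 ∧ (p:ℤ) ∣ h ∧ (p:ℤ) ∣ h) ↔ (h ≠ 0 ∧ (p:ℤ) ∣ h) :=
        fun h => by tauto
      have heq : (∑' h : {h : ℤ // h ≠ 0 ∧ (p:ℤ) ∣ h ∧ (p:ℤ) ∣ h}, (|(h:ℤ)|:ℝ) ^ (-(2*α)))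
          = ∑' h : {h : ℤ // h ≠ 0 ∧ (p:ℤ) ∣ h}, (|(h:ℤ)|:ℝ) ^ (-(2*α)) :=
        Equiv.tsum_eq (Equiv.subtypeEquivRight e1)
          (fun h : {h : ℤ // h ≠ 0 ∧ (p:ℤ) ∣ h} => (|(h:ℤ)|:ℝ) ^ (-(2*α)))
      rw [heq, sumdvd _ hp0]
      have hb : m ^ (-(2*α)) * S ≥ (((p:ℤ):ℝ)) ^ (-(2*α)) * S := by
        apply mul_le_mul_of_nonneg_right _ hS0
        apply Real.rpow_le_rpow_of_nonpos hm0 _ (by linarith)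
        push_cast; linarith
      exact hb
    · rw [if_neg hpq]
      have hco : IsCoprime (p:ℤ) (q:ℤ) :=
        Nat.Coprime.isCoprime ((Nat.coprime_primes hpp hqp).mpr hpq)
      have e1 : ∀ h : ℤ, (h ≠ 0 ∧ (p:ℤ) ∣ h ∧ (q:ℤ) ∣ h) ↔ (h ≠ 0 ∧ ((p:ℤ)*(q:ℤ)) ∣ h) := by
        intro h
        constructor
        · rintro ⟨h0, h1, h2⟩; exact ⟨h0, hco.mul_dvd h1 h2⟩
        · rintro ⟨h0, h1⟩; exact ⟨h0, (dvd_mul_right _ _).trans h1, (dvd_mul_left _ _).trans h1⟩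
      have heq : (∑' h : {h : ℤ // h ≠ 0 ∧ (p:ℤ) ∣ h ∧ (q:ℤ) ∣ h}, (|(h:ℤ)|:ℝ) ^ (-(2*α)))
          = ∑' h : {h : ℤ // h ≠ 0 ∧ ((p:ℤ)*(q:ℤ)) ∣ h}, (|(h:ℤ)|:ℝ) ^ (-(2*α)) :=
        Equiv.tsum_eq (Equiv.subtypeEquivRight e1)
          (fun h : {h : ℤ // h ≠ 0 ∧ ((p:ℤ)*(q:ℤ)) ∣ h} => (|(h:ℤ)|:ℝ) ^ (-(2*α)))
      rw [heq, sumdvd _ (mul_pos hp0 hq0)]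
      apply mul_le_mul_of_nonneg_right _ hS0
      apply Real.rpow_le_rpow_of_nonpos (by positivity) _ (by linarith)
      push_cast
      have : m * m ≤ (p:ℝ) * (q:ℝ) := mul_le_mul hpl.le hql.le hm0.le (by linarith)
      linarith
  -- double sum bound
  set c : ℝ := ((Pn n).card : ℝ) with hc
  have hBo0 : 0 ≤ (m*m) ^ (-(2*α)) * S := by positivity
  have hBd0 : 0 ≤ m ^ (-(2*α)) * S := by positivity
  have hsum1 : (∑ p ∈ Pn n, ∑ q ∈ Pn n,
        ∑' h : {h : ℤ // h ≠ 0 ∧ (p:ℤ) ∣ h ∧ (q:ℤ) ∣ h}, (|(h:ℤ)|:ℝ) ^ (-(2*α)))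
      ≤ c * (m ^ (-(2*α)) * S) + c^2 * ((m*m) ^ (-(2*α)) * S) := by
    have step1 : (∑ p ∈ Pn n, ∑ q ∈ Pn n,
          ∑' h : {h : ℤ // h ≠ 0 ∧ (p:ℤ) ∣ h ∧ (q:ℤ) ∣ h}, (|(h:ℤ)|:ℝ) ^ (-(2*α)))
        ≤ ∑ p ∈ Pn n, ∑ q ∈ Pn n,
            ((if p = q then m ^ (-(2*α)) * S else 0) + (m*m) ^ (-(2*α)) * S) := by
      apply Finset.sum_le_sum
      intro p hp
      apply Finset.sum_le_sum
      intro q hq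
      refine le_trans (hpair p hp q hq) ?_
      split_ifs
      · linarith
      · linarith
    refine le_trans step1 ?_
    rw [show (c * (m ^ (-(2*α)) * S) + c^2 * ((m*m) ^ (-(2*α)) * S)) = _ from rfl]
    have expand : ∀ p ∈ Pn n, (∑ q ∈ Pn n,
        ((if p = q then m ^ (-(2*α)) * S else 0) + (m*m) ^ (-(2*α)) * S))
        = m ^ (-(2*α)) * S + c * ((m*m) ^ (-(2*α)) * S) := by
      intro p hp
      rw [Finset.sum_add_distrib, Finset.sum_ite_eq, if_pos hp, Finset.sum_const,
        nsmul_eq_mul]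
    rw [Finset.sum_congr rfl expand, Finset.sum_const, nsmul_eq_mul]
    rw [hc]
    ring_nf
    apply le_of_eq
    ring
  -- inverse card bound
  have hinv : 1 / c ≤ Real.log n / (c' * n) := by
    rw [div_le_div_iff₀ hcard (by positivity)]
    have h9 := (div_lt_iff₀ hlog).mp hc'
    linarith
  -- value of m ^ (-(2*lam))
  have hmval : m ^ (-(2*lam)) = 2 ^ (2*lam) * (n:ℝ) ^ (-(2*lam)) := by
    rw [hm, Real.div_rpow hn0.le (by norm_num), Real.rpow_neg hn0.le,
      Real.rpow_neg (by norm_num : (0:ℝ) ≤ 2)]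
    field_simp
  have hmd : m ^ (-(2*α)) ≤ m ^ (-(2*lam)) :=
    Real.rpow_le_rpow_of_exponent_le hm1 (by linarith)
  -- final chain
  have hfinal1 : (1 / c^2) * (c * (m ^ (-(2*α)) * S) + c^2 * ((m*m) ^ (-(2*α)) * S))
      = (1/c) * (m ^ (-(2*α)) * S) + (m*m) ^ (-(2*α)) * S := by
    field_simp
  have hnp : (n:ℝ) ^ (2*lam+1) = (n:ℝ) ^ (2*lam) * n := by
    rw [Real.rpow_add hn0, Real.rpow_one]
  have hnp0 : (0:ℝ) < (n:ℝ) ^ (2*lam) := Real.rpow_pos_of_pos hn0 _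
  have hTp0 : (0:ℝ) < T ^ (2*lam) := Real.rpow_pos_of_pos hT0 _
  -- claim 1
  have hclaim1 : (1/c) * (m ^ (-(2*α)) * S)
      ≤ 2 ^ (2*lam) / c' * Real.log n / (n:ℝ) ^ (2*lam+1) * T ^ (2*lam) := by
    have h1 : (1/c) * (m ^ (-(2*α)) * S)
        ≤ (Real.log n / (c' * n)) * (m ^ (-(2*lam)) * T ^ (2*lam)) := by
      apply mul_le_mul hinv _ (by positivity) (by positivity)
      exact mul_le_mul (le_trans hmd (le_refl _)) hST hS0 (by positivity)
    refine le_trans h1 (le_of_eq ?_)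
    rw [hmval, hnp, Real.rpow_neg hn0.le]
    field_simp
  -- claim 2
  have hclaim2 : (m*m) ^ (-(2*α)) * S
      ≤ 2 ^ (4*lam+1) * Real.log n / (n:ℝ) ^ (2*lam+1) * T ^ (2*lam) := by
    have hmm1 : (1:ℝ) ≤ m * m := by nlinarith
    have h1 : (m*m) ^ (-(2*α)) ≤ (m*m) ^ (-(2*lam)) :=
      Real.rpow_le_rpow_of_exponent_le hmm1 (by linarith)
    have h2 : (m*m) ^ (-(2*lam)) = m ^ (-(2*lam)) * m ^ (-(2*lam)) :=
      Real.mul_rpow hm0.le hm0.le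
    have h3 : m ^ (-(2*lam)) * m ^ (-(2*lam))
        = 2 ^ (4*lam) * ((n:ℝ) ^ (-(2*lam)) * (n:ℝ) ^ (-(2*lam))) := by
      rw [hmval]
      rw [show (4*lam : ℝ) = 2*lam + 2*lam by ring, Real.rpow_add (by norm_num : (0:ℝ) < 2)]
      ring
    have h4 : (n:ℝ) ^ (-(2*lam)) * (n:ℝ) ^ (-(2*lam)) = (n:ℝ) ^ (-(4*lam)) := by
      rw [← Real.rpow_add hn0]; ring_nf
    have h5 : (n:ℝ) ^ (-(4*lam)) ≤ (n:ℝ) ^ (-(2*lam+1)) :=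
      Real.rpow_le_rpow_of_exponent_le hn1 (by linarith)
    have h6 : (n:ℝ) ^ (-(2*lam+1)) ≤ 2 * Real.log n * (n:ℝ) ^ (-(2*lam+1)) := by
      nlinarith [Real.rpow_pos_of_pos hn0 (-(2*lam+1))]
    calc (m*m) ^ (-(2*α)) * S
        ≤ (m*m) ^ (-(2*lam)) * T ^ (2*lam) := by
          apply mul_le_mul h1 hST hS0 (by positivity)
      _ = 2 ^ (4*lam) * (n:ℝ) ^ (-(4*lam)) * T ^ (2*lam) := by rw [h2, h3, h4]
      _ ≤ 2 ^ (4*lam) * (2 * Real.log n * (n:ℝ) ^ (-(2*lam+1))) * T ^ (2*lam) := by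
          apply mul_le_mul_of_nonneg_right _ hTp0.le
          apply mul_le_mul_of_nonneg_left (le_trans h5 h6) (by positivity)
      _ = 2 ^ (4*lam+1) * Real.log n / (n:ℝ) ^ (2*lam+1) * T ^ (2*lam) := by
          rw [Real.rpow_add (by norm_num : (0:ℝ) < 2) (4*lam) 1, Real.rpow_one,
            Real.rpow_neg hn0.le (2*lam+1)]
          ring
  calc (1 / c ^ 2) * ∑ p ∈ Pn n, ∑ q ∈ Pn n,
          ∑' h : {h : ℤ // h ≠ 0 ∧ (p:ℤ) ∣ h ∧ (q:ℤ) ∣ h}, (|(h:ℤ)|:ℝ) ^ (-(2*α))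
      ≤ (1 / c^2) * (c * (m ^ (-(2*α)) * S) + c^2 * ((m*m) ^ (-(2*α)) * S)) := by
        apply mul_le_mul_of_nonneg_left hsum1 (by positivity)
    _ = (1/c) * (m ^ (-(2*α)) * S) + (m*m) ^ (-(2*α)) * S := hfinal1
    _ ≤ 2 ^ (2*lam) / c' * Real.log n / (n:ℝ) ^ (2*lam+1) * T ^ (2*lam)
        + 2 ^ (4*lam+1) * Real.log n / (n:ℝ) ^ (2*lam+1) * T ^ (2*lam) :=
        add_le_add hclaim1 hclaim2
    _ = ((2:ℝ) ^ (2*lam) / c' + 2 ^ (4*lam+1)) * Real.log n / (n:ℝ) ^ (2*lam+1) * T ^ (2*lam) := by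
        ring
end

section
/- Let α > 1/2 be an integer and p prime. For product weights γ_j > 0, z = (z_1,…,z_s) ∈ Z^s with gcd(z_s, p) arbitrary, the quantity θ(z_s) := ∑_{h∈Z^s, h_s ≠ 0, h·z ≡ 0 mod p} ∏_{j∈supp(h)} γ_j² |h_j|^{−2α} equals (γ_s²/p) ∑_{k=0}^{p−1} σ_α(k z_s/p) ∏_{j=1}^{s−1} (1 + γ_j² σ_α(k z_j/p)), where σ_α(x) = ∑_{h≠0} e^{2πihx}/|h|^{2α}. -/
open scoped BigOperators Classical Real

/-- `σ_α(x) = ∑_{h ≠ 0} e^{2πihx} / |h|^{2α}`. -/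
noncomputable def sigmaA (α : ℕ) (x : ℝ) : ℂ :=
  ∑' h : {h : ℤ // h ≠ 0},
    Complex.exp (2 * (π : ℂ) * Complex.I * ((h : ℤ) : ℂ) * (x : ℂ)) /
      (((|(h : ℤ)| : ℝ) ^ (2 * α) : ℝ) : ℂ)

/-! ### Auxiliary definitions and lemmas -/

/-- The generic summand: weight `b` at `h = 0`, otherwise `g² e^{2πihx}/|h|^{2α}`. -/
noncomputable def trm (α : ℕ) (g : ℝ) (b : ℂ) (x : ℝ) (h : ℤ) : ℂ :=
  if h = 0 then b
  else ((g ^ 2 : ℝ) : ℂ) *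
    (Complex.exp (2 * (π : ℂ) * Complex.I * (h : ℂ) * (x : ℂ)) /
      (((|h| : ℝ) ^ (2 * α) : ℝ) : ℂ))

/-- Weight attached to a multi-index, vanishing when the last coordinate vanishes. -/
noncomputable def wA (α : ℕ) {m : ℕ} (γ : Fin m → ℝ) (L : Fin m) (h : Fin m → ℤ) : ℝ :=
  if h L = 0 then 0
  else ∏ j ∈ Finset.univ.filter (fun j => h j ≠ 0), γ j ^ 2 * ((|h j| : ℝ) ^ (2 * α))⁻¹

lemma base_summable {α : ℕ} (hα : 1 ≤ α) :
    Summable fun h : ℤ => (((|h| : ℝ)) ^ (2 * α))⁻¹ := by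
  have h1 : 1 < 2 * α := by omega
  refine (Real.summable_one_div_int_pow.mpr h1).congr fun h => ?_
  rw [one_div, Even.pow_abs (even_two_mul α)]

lemma norm_trm (α : ℕ) (g : ℝ) (b : ℂ) (x : ℝ) (h : ℤ) :
    ‖trm α g b x h‖ = if h = 0 then ‖b‖ else g ^ 2 * ((|h| : ℝ) ^ (2 * α))⁻¹ := by
  unfold trm
  split_ifs with h0
  · rfl
  · have he : (2 * (π : ℂ) * Complex.I * (h : ℂ) * (x : ℂ))
        = ((2 * π * (h : ℝ) * x : ℝ) : ℂ) * Complex.I := by push_cast; ring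
    rw [he, norm_mul, norm_div, Complex.norm_exp_ofReal_mul_I, Complex.norm_real,
      Complex.norm_real, Real.norm_eq_abs, Real.norm_eq_abs, abs_of_nonneg (sq_nonneg g),
      abs_of_nonneg (by positivity : (0:ℝ) ≤ (|h| : ℝ) ^ (2 * α)), one_div]

lemma summable_norm_trm {α : ℕ} (hα : 1 ≤ α) (g : ℝ) (b : ℂ) (x : ℝ) :
    Summable fun h : ℤ => ‖trm α g b x h‖ := by
  have h1 : Summable fun h : ℤ => g ^ 2 * ((|h| : ℝ) ^ (2 * α))⁻¹ :=
    (base_summable hα).mul_left _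
  have h2 : Summable fun h : ℤ => if h = 0 then ‖b‖ else 0 :=
    summable_of_ne_finset_zero (s := {0}) (fun h hh => if_neg (by simpa using hh))
  refine (h1.add h2).congr fun h => ?_
  rw [norm_trm]
  split_ifs with h0
  · subst h0; norm_num; right; omega
  · simp

lemma tsum_trm_zero (α : ℕ) (g : ℝ) (x : ℝ) :
    ∑' h : ℤ, trm α g 0 x h = ((g ^ 2 : ℝ) : ℂ) * sigmaA α x := by
  have hsupp : Function.support (trm α g 0 x) ⊆ {h : ℤ | h ≠ 0} := by
    intro h hh h0
    apply hh
    simp [trm, h0]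
  calc ∑' h : ℤ, trm α g 0 x h
      = ∑' h : {h : ℤ | h ≠ 0}, trm α g 0 x h :=
        (tsum_subtype_eq_of_support_subset hsupp).symm
    _ = ∑' h : {h : ℤ // h ≠ 0}, ((g ^ 2 : ℝ) : ℂ) *
          (Complex.exp (2 * (π : ℂ) * Complex.I * ((h : ℤ) : ℂ) * (x : ℂ)) /
            (((|(h : ℤ)| : ℝ) ^ (2 * α) : ℝ) : ℂ)) :=
        tsum_congr fun h => by rw [trm, if_neg h.2]
    _ = ((g ^ 2 : ℝ) : ℂ) * sigmaA α x := by rw [sigmaA, tsum_mul_left]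

lemma tsum_trm_one {α : ℕ} (hα : 1 ≤ α) (g : ℝ) (x : ℝ) :
    ∑' h : ℤ, trm α g 1 x h = 1 + ((g ^ 2 : ℝ) : ℂ) * sigmaA α x := by
  have hd : ∀ h : ℤ, trm α g 1 x h = trm α g 0 x h + (if h = 0 then 1 else 0) := by
    intro h
    unfold trm
    split_ifs with h0 <;> simp
  have hs1 : Summable (trm α g 0 x) := (summable_norm_trm hα g 0 x).of_norm
  have hs2 : Summable fun h : ℤ => if h = 0 then (1 : ℂ) else 0 :=
    summable_of_ne_finset_zero (s := {0}) (fun h hh => if_neg (by simpa using hh))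
  rw [tsum_congr hd, Summable.tsum_add hs1 hs2, tsum_trm_zero, tsum_ite_eq, add_comm]

lemma prod_tsum_eq {n : ℕ} (c : Fin n → ℤ → ℂ) (hc : ∀ j, Summable fun h => ‖c j h‖) :
    Summable (fun h : Fin n → ℤ => ‖∏ j, c j (h j)‖) ∧
      (∏ j, ∑' h : ℤ, c j h) = ∑' h : Fin n → ℤ, ∏ j, c j (h j) := by
  induction n with
  | zero =>
    constructor
    · exact .of_finite
    · simp only [Finset.univ_eq_empty, Finset.prod_empty]
      rw [tsum_eq_single (fun i => i.elim0) fun b hb => absurd (Subsingleton.elim b _) hb]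
  | succ n ih =>
    obtain ⟨hS, hT⟩ := ih (fun i => c i.succ) (fun i => hc i.succ)
    have main : ∀ G : (Fin n → ℤ) → ℂ, (∀ g, G g = ∏ i, c i.succ (g i)) →
        (Summable (fun h : Fin (n + 1) → ℤ => ‖∏ j, c j (h j)‖) ∧
          (∏ j, ∑' h : ℤ, c j h) = ∑' h : Fin (n + 1) → ℤ, ∏ j, c j (h j)) := by
      intro G hG
      simp only [← hG] at hS hT
      set e := Fin.consEquiv (fun _ : Fin (n + 1) => ℤ) with he
      have hcons : ∀ (a : ℤ) (g : Fin n → ℤ),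
          (∏ j, c j ((Fin.cons a g : Fin (n + 1) → ℤ) j)) = c 0 a * G g := by
        intro a g
        rw [Fin.prod_univ_succ, hG]
        simp
      have hSnorm : Summable fun q : ℤ × (Fin n → ℤ) => ‖c 0 q.1 * G q.2‖ :=
        (hc 0).mul_norm hS
      constructor
      · refine (Equiv.summable_iff e (f := fun h : Fin (n + 1) → ℤ => ‖∏ j, c j (h j)‖)).mp ?_
        refine hSnorm.congr fun q => ?_
        simp only [Function.comp_apply, he, Fin.consEquiv_apply]
        rw [hcons q.1 q.2]
      · calc (∏ j : Fin (n + 1), ∑' h : ℤ, c j h)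
            = (∑' h : ℤ, c 0 h) * ∏ i : Fin n, ∑' h : ℤ, c i.succ h := Fin.prod_univ_succ _
          _ = (∑' h : ℤ, c 0 h) * ∑' g : Fin n → ℤ, G g := by rw [hT]
          _ = ∑' q : ℤ × (Fin n → ℤ), c 0 q.1 * G q.2 :=
              tsum_mul_tsum_of_summable_norm (hc 0) hS
          _ = ∑' h : Fin (n + 1) → ℤ, ∏ j, c j (h j) := by
              rw [← Equiv.tsum_eq e (fun h : Fin (n + 1) → ℤ => ∏ j, c j (h j))]
              refine tsum_congr fun q => ?_
              simp only [he, Fin.consEquiv_apply]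
              rw [hcons q.1 q.2]
    exact main _ (fun g => rfl)

lemma char_sum (p : ℕ) (hp : p ≠ 0) (m : ℤ) :
    ∑ k ∈ Finset.range p, Complex.exp (2 * (π : ℂ) * Complex.I * k * m / p) =
      if (p : ℤ) ∣ m then (p : ℂ) else 0 := by
  have hp' : (p : ℂ) ≠ 0 := Nat.cast_ne_zero.mpr hp
  have hzk : ∀ k : ℕ, Complex.exp (2 * (π : ℂ) * Complex.I * k * m / p)
      = Complex.exp (2 * (π : ℂ) * Complex.I * m / p) ^ k := by
    intro k
    rw [show (2 * (π : ℂ) * Complex.I * k * m / p)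
      = k * (2 * (π : ℂ) * Complex.I * m / p) by ring, Complex.exp_nat_mul]
  simp only [hzk]
  split_ifs with hd
  · obtain ⟨t, ht⟩ := hd
    have h1 : (2 * (π : ℂ) * Complex.I * m / p) = (t : ℂ) * (2 * π * Complex.I) := by
      rw [ht]; push_cast; field_simp
    rw [h1, Complex.exp_int_mul_two_pi_mul_I]
    simp
  · have hζ : Complex.exp (2 * (π : ℂ) * Complex.I * m / p) ≠ 1 := by
      intro hone
      obtain ⟨t, ht⟩ := Complex.exp_eq_one_iff.mp hone
      apply hd
      refine ⟨t, ?_⟩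
      have : (m : ℂ) = ((p : ℤ) * t : ℤ) := by
        push_cast
        have h2 : (2 * (π : ℂ) * Complex.I * m) = (t : ℂ) * (2 * π * Complex.I) * p := by
          field_simp at ht
          linear_combination (2 * (π : ℂ) * Complex.I) * ht
        have h3 : (2 * (π : ℂ) * Complex.I) ≠ 0 := Complex.two_pi_I_ne_zero
        have h4 : (2 * (π : ℂ) * Complex.I) * (m : ℂ)
            = (2 * (π : ℂ) * Complex.I) * ((t : ℂ) * p) := by linear_combination h2
        rw [mul_left_cancel₀ h3 h4]
        ring
      exact_mod_cast this
    rw [geom_sum_eq hζ]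
    have hp2 : Complex.exp (2 * (π : ℂ) * Complex.I * m / p) ^ p = 1 := by
      rw [← Complex.exp_nat_mul, show (p : ℂ) * (2 * (π : ℂ) * Complex.I * m / p)
        = (m : ℂ) * (2 * π * Complex.I) by field_simp,
        Complex.exp_int_mul_two_pi_mul_I]
    rw [hp2]
    simp

lemma prod_trm_eq (α : ℕ) {d : ℕ} (γ : Fin (d + 1) → ℝ) (z : Fin (d + 1) → ℤ)
    (p : ℕ) (k : ℕ) (h : Fin (d + 1) → ℤ) :
    (∏ j, trm α (γ j) (if j = Fin.last d then (0 : ℂ) else 1) ((k : ℝ) * (z j : ℝ) / p) (h j))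
      = ((wA α γ (Fin.last d) h : ℝ) : ℂ) *
        Complex.exp (2 * (π : ℂ) * Complex.I * k * ((∑ j, h j * z j : ℤ) : ℂ) / p) := by
  by_cases hLz : h (Fin.last d) = 0
  · have h0 : trm α (γ (Fin.last d)) (if Fin.last d = Fin.last d then (0 : ℂ) else 1)
        ((k : ℝ) * (z (Fin.last d) : ℝ) / p) (h (Fin.last d)) = 0 := by
      rw [hLz]; simp [trm]
    rw [Finset.prod_eq_zero (Finset.mem_univ (Fin.last d)) h0]
    rw [wA, if_pos hLz]
    simp
  · have each : ∀ j, trm α (γ j) (if j = Fin.last d then (0 : ℂ) else 1)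
        ((k : ℝ) * (z j : ℝ) / p) (h j) =
        ((if h j = 0 then 1 else γ j ^ 2 * ((|h j| : ℝ) ^ (2 * α))⁻¹ : ℝ) : ℂ) *
          Complex.exp (2 * (π : ℂ) * Complex.I * ((h j : ℤ) : ℂ) * (k : ℂ)
            * ((z j : ℤ) : ℂ) / p) := by
      intro j
      by_cases hj : h j = 0
      · have hjL : j ≠ Fin.last d := fun hEq => hLz (hEq ▸ hj)
        rw [hj]
        simp [trm, hjL]
      · rw [if_neg hj]
        rw [trm, if_neg hj]
        have harg : (2 * (π : ℂ) * Complex.I * ((h j : ℤ) : ℂ)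
              * (((k : ℝ) * (z j : ℝ) / p : ℝ) : ℂ))
            = 2 * (π : ℂ) * Complex.I * ((h j : ℤ) : ℂ) * (k : ℂ) * ((z j : ℤ) : ℂ) / p := by
          push_cast; ring
        rw [harg]
        push_cast
        ring
    rw [Finset.prod_congr rfl fun j _ => each j, Finset.prod_mul_distrib]
    congr 1
    · rw [← Complex.ofReal_prod]
      congr 1
      rw [wA, if_neg hLz, Finset.prod_filter]
      exact Finset.prod_congr rfl fun j _ => by by_cases hj : h j = 0 <;> simp [hj]
    · rw [← Complex.exp_sum]
      congr 1
      have hterm : ∀ j : Fin (d + 1),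
          (2 * (π : ℂ) * Complex.I * ((h j : ℤ) : ℂ) * (k : ℂ) * ((z j : ℤ) : ℂ) / p)
            = (2 * (π : ℂ) * Complex.I * (k : ℂ) / p) * ((h j * z j : ℤ) : ℂ) := by
        intro j; push_cast; ring
      rw [Finset.sum_congr rfl fun j _ => hterm j, ← Finset.mul_sum]
      push_cast
      ring

lemma tsum_prod_trm {α : ℕ} (hα : 1 ≤ α) {d : ℕ} (γ : Fin (d + 1) → ℝ)
    (z : Fin (d + 1) → ℤ) (p : ℕ) (k : ℕ) :
    ((γ (Fin.last d) ^ 2 : ℝ) : ℂ) *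
        (sigmaA α ((k : ℝ) * (z (Fin.last d) : ℝ) / p) *
          ∏ j : Fin d, (1 + ((γ j.castSucc ^ 2 : ℝ) : ℂ) *
            sigmaA α ((k : ℝ) * (z j.castSucc : ℝ) / p)))
      = ∑' h : Fin (d + 1) → ℤ,
          ∏ j, trm α (γ j) (if j = Fin.last d then (0 : ℂ) else 1)
            ((k : ℝ) * (z j : ℝ) / p) (h j) := by
  have E := (prod_tsum_eq
    (fun j => trm α (γ j) (if j = Fin.last d then (0 : ℂ) else 1) ((k : ℝ) * (z j : ℝ) / p))
    (fun j => summable_norm_trm hα _ _ _)).2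
  refine Eq.trans ?_ E
  rw [Fin.prod_univ_castSucc]
  have h1 : ∀ i : Fin d,
      (∑' h : ℤ, trm α (γ i.castSucc) (if i.castSucc = Fin.last d then (0 : ℂ) else 1)
        ((k : ℝ) * (z i.castSucc : ℝ) / p) h)
      = 1 + ((γ i.castSucc ^ 2 : ℝ) : ℂ) * sigmaA α ((k : ℝ) * (z i.castSucc : ℝ) / p) := by
    intro i
    rw [if_neg (Fin.castSucc_lt_last i).ne, tsum_trm_one hα]
  have h2 : (∑' h : ℤ, trm α (γ (Fin.last d)) (if Fin.last d = Fin.last d then (0 : ℂ) else 1)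
        ((k : ℝ) * (z (Fin.last d) : ℝ) / p) h)
      = ((γ (Fin.last d) ^ 2 : ℝ) : ℂ) * sigmaA α ((k : ℝ) * (z (Fin.last d) : ℝ) / p) := by
    rw [if_pos rfl, tsum_trm_zero]
  rw [Finset.prod_congr rfl fun i _ => h1 i, h2]
  ring

theorem stmt18 (α : ℕ) (hα : 1 ≤ α) (p : ℕ) (hp : p.Prime)
    (d : ℕ) (γ : Fin (d + 1) → ℝ) (hγ : ∀ j, 0 < γ j) (z : Fin (d + 1) → ℤ) :
    ((∑' h : {h : Fin (d + 1) → ℤ //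
        h (Fin.last d) ≠ 0 ∧ (p : ℤ) ∣ ∑ j, h j * z j},
        ∏ j ∈ Finset.univ.filter (fun j => h.1 j ≠ 0),
          γ j ^ 2 * ((|h.1 j| : ℝ) ^ (2 * α))⁻¹ : ℝ) : ℂ) =
      ((γ (Fin.last d) ^ 2 / p : ℝ) : ℂ) * ∑ k ∈ Finset.range p,
        sigmaA α ((k : ℝ) * (z (Fin.last d) : ℝ) / p) *
          ∏ j : Fin d,
            (1 + ((γ j.castSucc ^ 2 : ℝ) : ℂ) *
              sigmaA α ((k : ℝ) * (z j.castSucc : ℝ) / p)) := by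
  have hp0 : p ≠ 0 := hp.ne_zero
  have hpC : (p : ℂ) ≠ 0 := Nat.cast_ne_zero.mpr hp0
  -- Step A: identify the LHS with a tsum of `wA` over `{h | p ∣ ∑ h j * z j}`
  have hLHS : ((∑' h : {h : Fin (d + 1) → ℤ //
        h (Fin.last d) ≠ 0 ∧ (p : ℤ) ∣ ∑ j, h j * z j},
        ∏ j ∈ Finset.univ.filter (fun j => h.1 j ≠ 0),
          γ j ^ 2 * ((|h.1 j| : ℝ) ^ (2 * α))⁻¹ : ℝ) : ℂ)
      = ∑' h : {h : Fin (d + 1) → ℤ // (p : ℤ) ∣ ∑ j, h j * z j},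
          ((wA α γ (Fin.last d) h.1 : ℝ) : ℂ) := by
    rw [Complex.ofReal_tsum]
    have e1 := tsum_subtype
      (s := {h : Fin (d + 1) → ℤ | h (Fin.last d) ≠ 0 ∧ (p : ℤ) ∣ ∑ j, h j * z j})
      (f := fun h : Fin (d + 1) → ℤ =>
        ((∏ j ∈ Finset.univ.filter (fun j => h j ≠ 0),
          γ j ^ 2 * ((|h j| : ℝ) ^ (2 * α))⁻¹ : ℝ) : ℂ))
    have e2 := tsum_subtype
      (s := {h : Fin (d + 1) → ℤ | (p : ℤ) ∣ ∑ j, h j * z j})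
      (f := fun h : Fin (d + 1) → ℤ => ((wA α γ (Fin.last d) h : ℝ) : ℂ))
    refine (e1.trans ?_).trans e2.symm
    refine tsum_congr fun h => ?_
    simp only [Set.indicator_apply, Set.mem_setOf_eq]
    by_cases h1 : (p : ℤ) ∣ ∑ j, h j * z j
    · by_cases h2 : h (Fin.last d) = 0
      · rw [if_pos h1, wA, if_pos h2, if_neg (fun hm => hm.1 h2)]
        simp
      · rw [if_pos h1, if_pos ⟨h2, h1⟩, wA, if_neg h2]
    · rw [if_neg h1, if_neg (fun hm => h1 hm.2)]
  rw [hLHS]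
  -- Step B: main computation
  have hsummable : ∀ k : ℕ, Summable (fun h : Fin (d + 1) → ℤ =>
      ((wA α γ (Fin.last d) h : ℝ) : ℂ) *
        Complex.exp (2 * (π : ℂ) * Complex.I * k * ((∑ j, h j * z j : ℤ) : ℂ) / p)) := by
    intro k
    refine ((prod_tsum_eq
      (fun j => trm α (γ j) (if j = Fin.last d then (0 : ℂ) else 1) ((k : ℝ) * (z j : ℝ) / p))
      (fun j => summable_norm_trm hα _ _ _)).1.of_norm).congr fun h => ?_
    exact prod_trm_eq α γ z p k h
  have hkey : ((γ (Fin.last d) ^ 2 : ℝ) : ℂ) * (∑ k ∈ Finset.range p,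
      sigmaA α ((k : ℝ) * (z (Fin.last d) : ℝ) / p) *
        ∏ j : Fin d, (1 + ((γ j.castSucc ^ 2 : ℝ) : ℂ) *
          sigmaA α ((k : ℝ) * (z j.castSucc : ℝ) / p)))
      = (p : ℂ) * ∑' h : {h : Fin (d + 1) → ℤ // (p : ℤ) ∣ ∑ j, h j * z j},
          ((wA α γ (Fin.last d) h.1 : ℝ) : ℂ) := by
    rw [Finset.mul_sum]
    calc (∑ k ∈ Finset.range p, ((γ (Fin.last d) ^ 2 : ℝ) : ℂ) *
            (sigmaA α ((k : ℝ) * (z (Fin.last d) : ℝ) / p) *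
              ∏ j : Fin d, (1 + ((γ j.castSucc ^ 2 : ℝ) : ℂ) *
                sigmaA α ((k : ℝ) * (z j.castSucc : ℝ) / p))))
        = ∑ k ∈ Finset.range p, ∑' h : Fin (d + 1) → ℤ,
            ((wA α γ (Fin.last d) h : ℝ) : ℂ) *
              Complex.exp (2 * (π : ℂ) * Complex.I * k * ((∑ j, h j * z j : ℤ) : ℂ) / p) := by
          refine Finset.sum_congr rfl fun k _ => ?_
          rw [tsum_prod_trm hα γ z p k]
          exact tsum_congr fun h => prod_trm_eq α γ z p k h
      _ = ∑' h : Fin (d + 1) → ℤ, ∑ k ∈ Finset.range p,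
            ((wA α γ (Fin.last d) h : ℝ) : ℂ) *
              Complex.exp (2 * (π : ℂ) * Complex.I * k * ((∑ j, h j * z j : ℤ) : ℂ) / p) :=
          (Summable.tsum_finsetSum fun k _ => hsummable k).symm
      _ = ∑' h : Fin (d + 1) → ℤ,
            ((wA α γ (Fin.last d) h : ℝ) : ℂ) *
              (if (p : ℤ) ∣ ∑ j, h j * z j then (p : ℂ) else 0) := by
          refine tsum_congr fun h => ?_
          rw [← Finset.mul_sum, char_sum p hp0 (∑ j, h j * z j)]
      _ = ∑' h : {h : Fin (d + 1) → ℤ // (p : ℤ) ∣ ∑ j, h j * z j},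
            ((wA α γ (Fin.last d) h.1 : ℝ) : ℂ) *
              (if (p : ℤ) ∣ ∑ j, h.1 j * z j then (p : ℂ) else 0) := by
          refine (tsum_subtype_eq_of_support_subset
            (s := {h : Fin (d + 1) → ℤ | (p : ℤ) ∣ ∑ j, h j * z j}) ?_).symm
          intro h hh
          simp only [Function.mem_support] at hh
          by_contra hmem
          refine hh ?_
          rw [if_neg (show ¬ (p : ℤ) ∣ ∑ j, h j * z j from hmem), mul_zero]
      _ = ∑' h : {h : Fin (d + 1) → ℤ // (p : ℤ) ∣ ∑ j, h j * z j},
            (p : ℂ) * ((wA α γ (Fin.last d) h.1 : ℝ) : ℂ) := by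
          refine tsum_congr fun h => ?_
          rw [if_pos h.2, mul_comm]
      _ = (p : ℂ) * ∑' h : {h : Fin (d + 1) → ℤ // (p : ℤ) ∣ ∑ j, h j * z j},
            ((wA α γ (Fin.last d) h.1 : ℝ) : ℂ) := tsum_mul_left
  have hdiv : ((γ (Fin.last d) ^ 2 / p : ℝ) : ℂ)
      = ((γ (Fin.last d) ^ 2 : ℝ) : ℂ) / (p : ℂ) := by push_cast; ring
  rw [hdiv]
  rw [div_mul_eq_mul_div, hkey, mul_comm, mul_div_assoc, div_self hpC, mul_one]
end

section
/- Let λ > 1/2. The function g(τ) = (1/(1−τ))^{2λ} (1−τ²)/(2τ) on (0,1) attains its minimum at τ* = (√(λ² + 2λ − 1) − λ)/(2λ − 1), and g(τ*) ≤ 3λ; moreover 2/τ* ≤ 2(1+√2)λ. -/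
open Real Set

-- log x ≥ 1 - 1/x
lemma aux_one_sub_inv_le_log {x : ℝ} (hx : 0 < x) : 1 - 1/x ≤ Real.log x := by
  have h := Real.log_le_sub_one_of_pos (x := x⁻¹) (by positivity)
  rw [Real.log_inv] at h
  have : -Real.log x ≤ x⁻¹ - 1 := h
  rw [one_div]
  linarith

-- log 3 ≥ 109/100
lemma aux_log_three : (109:ℝ)/100 ≤ Real.log 3 := by
  have h1 : Real.exp 1 < 2.7182818286 := Real.exp_one_lt_d9
  have h2 : Real.exp (-(9/100)) ≥ 1 - 9/100 := by
    have := Real.add_one_le_exp (-(9/100:ℝ)); linarith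
  have h2' : Real.exp (9/100) ≤ 100/91 := by
    have hpos : (0:ℝ) < Real.exp (-(9/100)) := Real.exp_pos _
    have : Real.exp (9/100) * Real.exp (-(9/100)) = 1 := by
      rw [← Real.exp_add]; norm_num
    nlinarith [Real.exp_pos (9/100:ℝ)]
  have h3 : Real.exp (1 + 9/100) ≤ 2.7182818286 * (100/91) := by
    rw [Real.exp_add]
    have := (Real.exp_pos (9/100:ℝ)).le
    nlinarith [Real.exp_pos (1:ℝ)]
  have h4 : Real.exp ((109:ℝ)/100) < 3 := by
    rw [show (109:ℝ)/100 = 1 + 9/100 by norm_num]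
    calc Real.exp (1 + 9/100) ≤ 2.7182818286 * (100/91) := h3
    _ < 3 := by norm_num
  exact (Real.le_log_iff_exp_le (by norm_num : (0:ℝ) < 3)).mpr h4.le

lemma aux_pos_of_deriv {φ φ' : ℝ → ℝ} {b : ℝ} (hb : 0 < b)
    (hd : ∀ y ∈ Icc (0:ℝ) b, HasDerivAt φ (φ' y) y)
    (hpos : ∀ y ∈ Ioo (0:ℝ) b, 0 < φ' y) (h0 : φ 0 = 0) : 0 ≤ φ b := by
  have hmono := strictMonoOn_of_deriv_pos (convex_Icc 0 b)
    (fun y hy => ((hd y hy).continuousAt.continuousWithinAt))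
    (by
      rw [interior_Icc]
      intro y hy
      rw [(hd y (Ioo_subset_Icc_self hy)).deriv]
      exact hpos y hy)
  have h := hmono (left_mem_Icc.2 hb.le) (right_mem_Icc.2 hb.le) hb
  rw [h0] at h
  exact h.le

-- x - x^2/2 ≤ log (1+x), for 0 ≤ x ≤ 1
lemma aux_log_lb {x : ℝ} (h0 : 0 ≤ x) (h1 : x ≤ 1) : x - x^2/2 ≤ Real.log (1+x) := by
  rcases eq_or_lt_of_le h0 with h | h
  · simp [← h]
  have key : 0 ≤ Real.log (1+x) - (x - x^2/2) := by
    apply aux_pos_of_deriv (φ' := fun y => 1/(1+y) - (1 - y)) h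
    · intro y hy
      have hy1 : (0:ℝ) < 1 + y := by cases hy; linarith
      have hlog : HasDerivAt (fun z : ℝ => Real.log (1+z)) (1/(1+y)) y := by
        have h' : HasDerivAt (fun z : ℝ => 1 + z) 1 y := (hasDerivAt_id y).const_add 1
        simpa [one_div, Function.comp_def] using (Real.hasDerivAt_log (ne_of_gt hy1)).comp y h'
      have hp : HasDerivAt (fun z : ℝ => z - z^2/2) (1 - y) y := by
        have := (hasDerivAt_id y).sub ((hasDerivAt_pow 2 y).div_const 2)
        refine this.congr_deriv ?_
        simp
      exact hlog.sub hp
    · intro y hy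
      obtain ⟨hy0, hyx⟩ := hy
      have hy1 : (0:ℝ) < 1 + y := by linarith
      have : 1/(1+y) - (1-y) = y^2/(1+y) := by field_simp; ring
      rw [this]; positivity
    · simp
  linarith

-- log (1+x) ≤ x - x^2/2 + x^3/3 - x^4/4 + x^5/5, for 0 ≤ x
lemma aux_log_ub {x : ℝ} (h0 : 0 ≤ x) :
    Real.log (1+x) ≤ x - x^2/2 + x^3/3 - x^4/4 + x^5/5 := by
  rcases eq_or_lt_of_le h0 with h | h
  · simp [← h]
  have key : 0 ≤ (x - x^2/2 + x^3/3 - x^4/4 + x^5/5) - Real.log (1+x) := by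
    apply aux_pos_of_deriv (φ' := fun y => (1 - y + y^2 - y^3 + y^4) - 1/(1+y)) h
    · intro y hy
      have hy1 : (0:ℝ) < 1 + y := by cases hy; linarith
      have hlog : HasDerivAt (fun z : ℝ => Real.log (1+z)) (1/(1+y)) y := by
        have h' : HasDerivAt (fun z : ℝ => 1 + z) 1 y := (hasDerivAt_id y).const_add 1
        simpa [one_div, Function.comp_def] using (Real.hasDerivAt_log (ne_of_gt hy1)).comp y h'
      have hp : HasDerivAt (fun z : ℝ => z - z^2/2 + z^3/3 - z^4/4 + z^5/5)
          (1 - y + y^2 - y^3 + y^4) y := by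
        have := ((((hasDerivAt_id y).sub ((hasDerivAt_pow 2 y).div_const 2)).add
          ((hasDerivAt_pow 3 y).div_const 3)).sub ((hasDerivAt_pow 4 y).div_const 4)).add
          ((hasDerivAt_pow 5 y).div_const 5)
        refine this.congr_deriv ?_
        simp
      exact hp.sub hlog
    · intro y hy
      obtain ⟨hy0, hyx⟩ := hy
      have hy1 : (0:ℝ) < 1 + y := by linarith
      have : (1 - y + y^2 - y^3 + y^4) - 1/(1+y) = y^5/(1+y) := by field_simp; ring
      rw [this]; positivity
    · simp
  linarith

-- -log(1-x) ≤ x + x^2/2 + x^3/3 + x^4/4 + x^5/(5*(1-x)), for 0 ≤ x < 1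
lemma aux_neglog_ub {x : ℝ} (h0 : 0 ≤ x) (h1 : x < 1) :
    -Real.log (1-x) ≤ x + x^2/2 + x^3/3 + x^4/4 + x^5/(5*(1-x)) := by
  rcases eq_or_lt_of_le h0 with h | h
  · simp [← h]
  have key : 0 ≤ (x + x^2/2 + x^3/3 + x^4/4 + x^5/(5*(1-x))) + Real.log (1-x) := by
    apply aux_pos_of_deriv
      (φ' := fun y => (1 + y + y^2 + y^3) + (5*y^4*(5*(1-y)) + y^5*5)/(5*(1-y))^2 + (-1)/(1-y)) h
    · intro y hy
      have hy1 : (0:ℝ) < 1 - y := by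
        obtain ⟨_, hyx⟩ := hy; linarith
      have hlog : HasDerivAt (fun z : ℝ => Real.log (1-z)) ((-1)/(1-y)) y := by
        have h' : HasDerivAt (fun z : ℝ => 1 - z) (-1) y := (hasDerivAt_id y).const_sub 1
        simpa [div_eq_mul_inv, mul_comm, Function.comp_def] using (Real.hasDerivAt_log (ne_of_gt hy1)).comp y h'
      have hq : HasDerivAt (fun z : ℝ => z^5/(5*(1-z)))
          ((5*y^4*(5*(1-y)) + y^5*5)/(5*(1-y))^2) y := by
        have hden : HasDerivAt (fun z : ℝ => 5*(1-z)) (-5) y := by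
          have : HasDerivAt (fun z : ℝ => 1 - z) (-1) y := (hasDerivAt_id y).const_sub 1
          simpa using this.const_mul 5
        have := (hasDerivAt_pow 5 y).div hden (by positivity)
        refine this.congr_deriv ?_
        field_simp
        norm_num
        ring
      have hp : HasDerivAt (fun z : ℝ => z + z^2/2 + z^3/3 + z^4/4) (1 + y + y^2 + y^3) y := by
        have := (((hasDerivAt_id y).add ((hasDerivAt_pow 2 y).div_const 2)).add
          ((hasDerivAt_pow 3 y).div_const 3)).add ((hasDerivAt_pow 4 y).div_const 4)
        refine this.congr_deriv ?_
        simp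
      exact (hp.add hq).add hlog
    · intro y hy
      obtain ⟨hy0, hyx⟩ := hy
      have hy1 : (0:ℝ) < 1 - y := by linarith
      have : (1 + y + y^2 + y^3) + (5*y^4*(5*(1-y)) + y^5*5)/(5*(1-y))^2 + (-1)/(1-y)
          = y^5/(5*(1-y)^2) := by field_simp; ring
      rw [this]; positivity
    · norm_num
  linarith

lemma aux_poly {t : ℝ} (h0 : 0 < t) (hc : t ≤ 3/5) :
    (1-t)*(t + t^2/2 + t^3/3 + t^4/4) + t^5/5
      ≤ t*(1+t)*(109/100 + (t^2 - (t^2)^2/2) - 2*(t - t^2/2 + t^3/3 - t^4/4 + t^5/5)) := by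
  nlinarith [mul_nonneg h0.le h0.le, mul_nonneg (mul_nonneg h0.le h0.le) h0.le,
    sq_nonneg (t - 7/20), mul_nonneg (mul_nonneg h0.le h0.le) (sq_nonneg (t-7/20)),
    mul_nonneg h0.le (sq_nonneg (t-7/20)),
    mul_nonneg (mul_nonneg (mul_nonneg h0.le h0.le) h0.le) (sub_nonneg.2 hc),
    mul_nonneg (mul_nonneg (mul_nonneg (mul_nonneg h0.le h0.le) h0.le) h0.le) (sub_nonneg.2 hc),
    mul_nonneg (mul_nonneg (mul_nonneg (mul_nonneg (mul_nonneg h0.le h0.le) h0.le) h0.le) h0.le)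
      (sub_nonneg.2 hc)]

lemma aux_poly2 {t : ℝ} (hc : 3/5 ≤ t) (h1 : t < 1) {l2 : ℝ} (hl2 : l2 < 0.6931471808) :
    (1-t)*(l2 - 1) + 1/2 ≤ t*(1+t)*((109:ℝ)/100 - 0.6931471808) := by
  nlinarith [mul_nonneg (sub_nonneg.2 hc) (sub_nonneg.2 hc),
    mul_nonneg (sub_nonneg.2 hc) (sub_nonneg.2 h1.le),
    mul_nonneg (sub_nonneg.2 h1.le) (sub_nonneg.2 (le_of_lt hl2))]

lemma aux_key {t : ℝ} (h0 : 0 < t) (h1 : t < 1) :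
    (1-t) * (-Real.log (1-t)) ≤ t*(1+t) * Real.log (3*(1+t^2)/(1+t)^2) := by
  have h1t : (0:ℝ) < 1 - t := by linarith
  have h1pt : (0:ℝ) < 1 + t := by linarith
  rcases le_or_gt t (3/5) with hc | hc
  · have hlogX : Real.log (3*(1+t^2)/(1+t)^2)
        = Real.log 3 + Real.log (1+t^2) - 2*Real.log (1+t) := by
      rw [Real.log_div (by positivity) (by positivity),
        Real.log_mul (by norm_num) (by positivity), Real.log_pow]
      push_cast; ring
    have hA : t^2 - (t^2)^2/2 ≤ Real.log (1+t^2) := aux_log_lb (by positivity) (by nlinarith)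
    have hB : Real.log (1+t) ≤ t - t^2/2 + t^3/3 - t^4/4 + t^5/5 := aux_log_ub h0.le
    have hC : -Real.log (1-t) ≤ t + t^2/2 + t^3/3 + t^4/4 + t^5/(5*(1-t)) :=
      aux_neglog_ub h0.le h1
    have hL3 := aux_log_three
    rw [hlogX]
    have hLHS : (1-t) * (-Real.log (1-t))
        ≤ (1-t)*(t + t^2/2 + t^3/3 + t^4/4) + t^5/5 := by
      have h' := mul_le_mul_of_nonneg_left hC h1t.le
      have he : (1-t)*(t^5/(5*(1-t))) = t^5/5 := by field_simp
      nlinarith [h']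
    have hRHS : t*(1+t)*(109/100 + (t^2 - (t^2)^2/2)
          - 2*(t - t^2/2 + t^3/3 - t^4/4 + t^5/5))
        ≤ t*(1+t) * (Real.log 3 + Real.log (1+t^2) - 2*Real.log (1+t)) := by
      have hpos : (0:ℝ) ≤ t*(1+t) := by positivity
      have hin : 109/100 + (t^2 - (t^2)^2/2) - 2*(t - t^2/2 + t^3/3 - t^4/4 + t^5/5)
          ≤ Real.log 3 + Real.log (1+t^2) - 2*Real.log (1+t) := by linarith
      exact mul_le_mul_of_nonneg_left hin hpos
    exact hLHS.trans ((aux_poly h0 hc).trans hRHS)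
  · have harg : (3:ℝ)/2 ≤ 3*(1+t^2)/(1+t)^2 := by
      rw [le_div_iff₀ (by positivity)]
      nlinarith [sq_nonneg (t-1)]
    have hlog32 : Real.log (3/2) ≤ Real.log (3*(1+t^2)/(1+t)^2) :=
      Real.log_le_log (by norm_num) harg
    have hl32 : (109:ℝ)/100 - 0.6931471808 ≤ Real.log (3/2) := by
      rw [Real.log_div (by norm_num) (by norm_num)]
      have h2 := Real.log_two_lt_d9
      have h3 := aux_log_three
      norm_num at *
      linarith
    have hneg : -Real.log (1-t) ≤ Real.log 2 - 1 + 1/(2*(1-t)) := by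
      have h2t : (0:ℝ) < 2*(1-t) := by linarith
      have hsplit : Real.log (2*(1-t)) = Real.log 2 + Real.log (1-t) :=
        Real.log_mul (by norm_num) (ne_of_gt h1t)
      have hb := aux_one_sub_inv_le_log h2t
      rw [hsplit] at hb
      linarith
    have hLHS : (1-t)*(-Real.log (1-t)) ≤ (1-t)*(Real.log 2 - 1) + 1/2 := by
      have h' := mul_le_mul_of_nonneg_left hneg h1t.le
      have he : (1-t)*(1/(2*(1-t))) = 1/2 := by field_simp
      nlinarith [h']
    have hRHS : t*(1+t)*((109:ℝ)/100 - 0.6931471808)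
        ≤ t*(1+t)*Real.log (3*(1+t^2)/(1+t)^2) := by
      have hpos : (0:ℝ) ≤ t*(1+t) := by positivity
      exact mul_le_mul_of_nonneg_left (hl32.trans hlog32) hpos
    exact hLHS.trans ((aux_poly2 hc.le h1 Real.log_two_lt_d9).trans hRHS)

set_option maxHeartbeats 1000000 in
theorem stmt19 (lam : ℝ) (hlam : 1 / 2 < lam) :
    let τstar : ℝ := (Real.sqrt (lam ^ 2 + 2 * lam - 1) - lam) / (2 * lam - 1)
    let g : ℝ → ℝ := fun τ => (1 / (1 - τ)) ^ (2 * lam) * (1 - τ ^ 2) / (2 * τ)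
    0 < τstar ∧ τstar < 1 ∧ (∀ τ : ℝ, 0 < τ → τ < 1 → g τstar ≤ g τ) ∧
      g τstar ≤ 3 * lam ∧ 2 / τstar ≤ 2 * (1 + Real.sqrt 2) * lam := by
  intro τstar g
  have hts0 : τstar = (Real.sqrt (lam ^ 2 + 2 * lam - 1) - lam) / (2 * lam - 1) := rfl
  have hgx : ∀ x : ℝ, g x = (1 / (1 - x)) ^ (2 * lam) * (1 - x ^ 2) / (2 * x) := fun _ => rfl
  clear_value τstar g
  have hlam0 : 0 < lam := by linarith
  have ha : 0 < 2*lam - 1 := by linarith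
  have hD : 0 < lam^2 + 2*lam - 1 := by nlinarith
  set sD : ℝ := Real.sqrt (lam ^ 2 + 2 * lam - 1) with hsDdef
  have hsD : sD^2 = lam^2 + 2*lam - 1 := Real.sq_sqrt hD.le
  have hsDpos : 0 < sD := Real.sqrt_pos.2 (by linarith)
  clear_value sD
  have hsDgt : lam < sD := by nlinarith
  have hts : τstar = (sD - lam)/(2*lam-1) := hts0
  have ht0 : 0 < τstar := by
    rw [hts]; exact div_pos (by linarith) ha
  have ht1 : τstar < 1 := by
    rw [hts, div_lt_one ha]
    nlinarith [sq_nonneg (2*lam-1)]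
  have hat : (2*lam-1)*τstar = sD - lam := by
    rw [hts]; field_simp
  have hroot : (2*lam-1)*τstar^2 + 2*lam*τstar - 1 = 0 := by
    have h2 : (0:ℝ) < 2*lam-1 := ha
    have := mul_left_cancel₀ (ne_of_gt ha) (b := (2*lam-1)*τstar^2 + 2*lam*τstar - 1) (c := 0)
    apply this
    rw [mul_zero]
    linear_combination ((2*lam-1)*τstar + sD - lam + 2*lam) * hat + hsD
  have h1t : (0:ℝ) < 1 - τstar := by linarith
  have h1pt : (0:ℝ) < 1 + τstar := by linarith
  -- F and its relation to g
  set F : ℝ → ℝ := fun x => -(2*lam * Real.log (1-x)) + Real.log (1-x^2) - Real.log (2*x)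
    with hFdef
  have hgF : ∀ x : ℝ, 0 < x → x < 1 → g x = Real.exp (F x) := by
    intro x hx0 hx1
    have hx1' : (0:ℝ) < 1 - x := by linarith
    have hx2 : (0:ℝ) < 1 - x^2 := by nlinarith
    have hx3 : (0:ℝ) < 2*x := by linarith
    rw [hgx x]
    have e1 : Real.exp (-(2*lam * Real.log (1-x))) = (1/(1-x)) ^ (2*lam) := by
      rw [Real.rpow_def_of_pos (by positivity : (0:ℝ) < 1/(1-x)), one_div, Real.log_inv]
      ring_nf
    have : Real.exp (F x)
        = Real.exp (-(2*lam * Real.log (1-x))) * Real.exp (Real.log (1-x^2))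
          / Real.exp (Real.log (2*x)) := by
      rw [← Real.exp_add, ← Real.exp_sub]
    rw [this, Real.exp_log hx2, Real.exp_log hx3, e1]
  -- derivative of F
  have hFderiv : ∀ x : ℝ, 0 < x → x < 1 →
      HasDerivAt F (((2*lam-1)*x^2 + 2*lam*x - 1)/(x*(1-x)*(1+x))) x := by
    intro x hx0 hx1
    have hx1' : (0:ℝ) < 1 - x := by linarith
    have hx2 : (0:ℝ) < 1 - x^2 := by nlinarith
    have hx3 : (0:ℝ) < 2*x := by linarith
    have d1 : HasDerivAt (fun y : ℝ => 1 - y) (-1) x := (hasDerivAt_id x).const_sub 1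
    have dlog1 : HasDerivAt (fun y : ℝ => Real.log (1-y)) ((1-x)⁻¹ * (-1)) x :=
      (Real.hasDerivAt_log (ne_of_gt hx1')).comp x d1
    have d2 : HasDerivAt (fun y : ℝ => 1 - y^2) (-(2*x)) x := by
      have := (hasDerivAt_pow 2 x).const_sub 1
      simpa using this
    have dlog2 : HasDerivAt (fun y : ℝ => Real.log (1-y^2)) ((1-x^2)⁻¹ * (-(2*x))) x :=
      (Real.hasDerivAt_log (ne_of_gt hx2)).comp (h₂ := Real.log) x d2
    have d3 : HasDerivAt (fun y : ℝ => 2*y) 2 x := by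
      simpa using (hasDerivAt_id x).const_mul 2
    have dlog3 : HasDerivAt (fun y : ℝ => Real.log (2*y)) ((2*x)⁻¹ * 2) x :=
      (Real.hasDerivAt_log (ne_of_gt hx3)).comp x d3
    have hcomb := ((dlog1.const_mul (2*lam)).neg.add dlog2).sub dlog3
    refine hcomb.congr_deriv ?_
    field_simp
    ring
  -- minimality of F at τstar
  have hmin : ∀ τ : ℝ, 0 < τ → τ < 1 → F τstar ≤ F τ := by
    intro τ hτ0 hτ1
    rcases lt_trichotomy τ τstar with hlt | heq | hgt
    · have hanti := strictAntiOn_of_deriv_neg (convex_Icc τ τstar)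
        (fun x hx => (hFderiv x (lt_of_lt_of_le hτ0 hx.1)
          (lt_of_le_of_lt hx.2 ht1)).continuousAt.continuousWithinAt)
        (by
          rw [interior_Icc]
          intro x hx
          have hx0 : 0 < x := hτ0.trans hx.1
          have hx1 : x < 1 := hx.2.trans ht1
          rw [(hFderiv x hx0 hx1).deriv]
          apply div_neg_of_neg_of_pos
          · have hbr : 0 < (2*lam-1)*(x+τstar) + 2*lam := by nlinarith
            have hprod : (x - τstar)*((2*lam-1)*(x+τstar) + 2*lam) < 0 :=
              mul_neg_of_neg_of_pos (by linarith [hx.2]) hbr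
            nlinarith [hprod, hroot]
          · have h1x : (0:ℝ) < 1 - x := by linarith
            have h2x : (0:ℝ) < 1 + x := by linarith
            positivity)
      exact (hanti (left_mem_Icc.2 hlt.le) (right_mem_Icc.2 hlt.le) hlt).le
    · rw [heq]
    · have hmono := strictMonoOn_of_deriv_pos (convex_Icc τstar τ)
        (fun x hx => (hFderiv x (lt_of_lt_of_le ht0 hx.1)
          (lt_of_le_of_lt hx.2 hτ1)).continuousAt.continuousWithinAt)
        (by
          rw [interior_Icc]
          intro x hx
          have hx0 : 0 < x := ht0.trans hx.1
          have hx1 : x < 1 := hx.2.trans hτ1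
          rw [(hFderiv x hx0 hx1).deriv]
          apply div_pos
          · have hbr : 0 < (2*lam-1)*(x+τstar) + 2*lam := by nlinarith
            have hprod : 0 < (x - τstar)*((2*lam-1)*(x+τstar) + 2*lam) :=
              mul_pos (by linarith [hx.1]) hbr
            nlinarith [hprod, hroot]
          · have h1x : (0:ℝ) < 1 - x := by linarith
            have h2x : (0:ℝ) < 1 + x := by linarith
            positivity)
      exact (hmono (left_mem_Icc.2 hgt.le) (right_mem_Icc.2 hgt.le) hgt).le
  refine ⟨ht0, ht1, ?_, ?_, ?_⟩
  · intro τ hτ0 hτ1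
    rw [hgF τstar ht0 ht1, hgF τ hτ0 hτ1]
    exact Real.exp_le_exp.2 (hmin τ hτ0 hτ1)
  · -- g τstar ≤ 3 lam
    rw [hgF τstar ht0 ht1]
    have hgoal : F τstar ≤ Real.log (3*lam) := by
      have hkey := aux_key ht0 ht1
      have hpos : 0 < τstar*(1+τstar) := by positivity
      have hrel : (2*lam-1)*(τstar*(1+τstar)) = 1 - τstar := by linear_combination hroot
      have h2rel : 2*lam*(τstar*(1+τstar)) = 1 + τstar^2 := by linear_combination hroot
      have haEq : (2*lam-1) = (1-τstar)/(τstar*(1+τstar)) := by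
        rw [eq_div_iff (ne_of_gt hpos)]; exact hrel
      have ha' : -((2*lam-1) * Real.log (1-τstar))
          ≤ Real.log (3*(1+τstar^2)/(1+τstar)^2) := by
        have e1 : -((2*lam-1) * Real.log (1-τstar))
            = ((1-τstar)*(-Real.log (1-τstar)))/(τstar*(1+τstar)) := by
          rw [haEq]; ring
        rw [e1]
        rw [div_le_iff₀ hpos]
        calc (1-τstar)*(-Real.log (1-τstar))
            ≤ τstar*(1+τstar) * Real.log (3*(1+τstar^2)/(1+τstar)^2) := hkey
          _ = Real.log (3*(1+τstar^2)/(1+τstar)^2) * (τstar*(1+τstar)) := by ring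
      have hFt : F τstar = -((2*lam-1) * Real.log (1-τstar)) + Real.log (1+τstar)
          - Real.log 2 - Real.log τstar := by
        show -(2*lam * Real.log (1-τstar)) + Real.log (1-τstar^2) - Real.log (2*τstar) = _
        rw [show (1:ℝ) - τstar^2 = (1-τstar)*(1+τstar) by ring,
          Real.log_mul (ne_of_gt h1t) (ne_of_gt h1pt),
          Real.log_mul (two_ne_zero) (ne_of_gt ht0)]
        ring
      have hlogX : Real.log (3*(1+τstar^2)/(1+τstar)^2)
          = Real.log 3 + Real.log (1+τstar^2) - 2*Real.log (1+τstar) := by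
        rw [Real.log_div (by positivity) (by positivity),
          Real.log_mul (by norm_num) (by positivity), Real.log_pow]
        push_cast; ring
      have hlamEq : lam = (1+τstar^2)/(2*(τstar*(1+τstar))) := by
        rw [eq_div_iff (by positivity)]
        linear_combination h2rel
      have hloglam : Real.log lam = Real.log (1+τstar^2) - Real.log 2 - Real.log τstar
          - Real.log (1+τstar) := by
        rw [hlamEq, Real.log_div (by positivity) (by positivity),
          Real.log_mul two_ne_zero (by positivity),
          Real.log_mul (ne_of_gt ht0) (ne_of_gt h1pt)]
        ring
      have hlog3lam : Real.log (3*lam) = Real.log 3 + Real.log lam :=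
        Real.log_mul (by norm_num) (ne_of_gt hlam0)
      rw [hlogX] at ha'
      rw [hFt, hlog3lam, hloglam]
      linarith [ha']
    calc Real.exp (F τstar) ≤ Real.exp (Real.log (3*lam)) := Real.exp_le_exp.2 hgoal
      _ = 3*lam := Real.exp_log (by positivity)
  · -- 2/τstar ≤ 2(1+√2)lam
    have hs2 : Real.sqrt 2 ^ 2 = 2 := Real.sq_sqrt (by norm_num)
    have hs2nn : 0 ≤ Real.sqrt 2 := Real.sqrt_nonneg 2
    have hs2b : 1 < Real.sqrt 2 := by nlinarith
    have hs2c : Real.sqrt 2 < 3/2 := by nlinarith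
    have hsD_lb : lam + (2*lam-1)*(Real.sqrt 2 - 1)/lam ≤ sD := by
      have hx' : 0 < (2*lam-1)*(Real.sqrt 2 - 1)/lam :=
        div_pos (mul_pos ha (by linarith)) hlam0
      have hx : 0 < lam + (2*lam-1)*(Real.sqrt 2 - 1)/lam := by linarith
      rw [hsDdef]
      rw [Real.le_sqrt' hx]
      have key := mul_nonneg (mul_nonneg ha.le
        (by linarith : (0:ℝ) ≤ 3 - 2*Real.sqrt 2)) (sq_nonneg (lam-1))
      have hlamne : lam ≠ 0 := ne_of_gt hlam0
      have e : lam + (2*lam-1)*(Real.sqrt 2 - 1)/lam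
          = (lam^2 + (2*lam-1)*(Real.sqrt 2 - 1))/lam := by
        field_simp
      rw [e, div_pow, div_le_iff₀ (by positivity)]
      nlinarith [key, hs2]
    have ht_lb : (Real.sqrt 2 - 1)/lam ≤ τstar := by
      have e2 : (Real.sqrt 2 - 1)/lam * (2*lam-1) = (2*lam-1)*(Real.sqrt 2 - 1)/lam := by
        ring
      rw [hts, le_div_iff₀ ha, e2]
      linarith [hsD_lb]
    have hq0 : 0 < (Real.sqrt 2 - 1)/lam := div_pos (by linarith) hlam0
    have h2' : 2/τstar ≤ 2/((Real.sqrt 2 - 1)/lam) :=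
      div_le_div_of_nonneg_left (by norm_num) hq0 ht_lb
    have h4 : 2/((Real.sqrt 2 - 1)/lam) = 2*(1+Real.sqrt 2)*lam := by
      rw [div_div_eq_mul_div, div_eq_iff (ne_of_gt (by linarith : (0:ℝ) < Real.sqrt 2 - 1))]
      linear_combination (-2*lam)*hs2
    linarith [h2', h4.symm.le]
end
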